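/- arXiv:math/0612081 — 6 statements merged into one kernel-verified Lean document; each statement's English description precedes it below -/
import Mathlib

section
/- Let 0 → L → M → N → 0 be a short exact sequence of cofinitely generated Z_p-modules. Then, taking projective limits of the torsion exact sequences, there is an exact sequence of finitely generated Z_p-modules 0 → T_p(L) → T_p(M) → T_p(N) → Cotor(L) → Cotor(M) → Cotor(N) → 0, where T_p(A) = lim← A[p^r] is the p-adic Tate module. -/
set_option synthInstance.maxHeartbeats 1000000
set_option maxHeartbeats 2000000
set_option linter.unnecessarySimpa false


abbrev QpModZp (p : ℕ) [Fact p.Prime] :=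
  ℚ_[p] ⧸ LinearMap.range (Algebra.linearMap ℤ_[p] ℚ_[p])

def CofinGen (p : ℕ) [Fact p.Prime] (A : Type*) [AddCommGroup A] [Module ℤ_[p] A] : Prop :=
  Module.Finite ℤ_[p] (A →ₗ[ℤ_[p]] QpModZp p)

def IsDivisibleSubmodule (p : ℕ) [Fact p.Prime] {A : Type*} [AddCommGroup A] [Module ℤ_[p] A]
    (D : Submodule ℤ_[p] A) : Prop :=
  ∀ x ∈ D, ∃ y ∈ D, (p : ℤ_[p]) • y = x

noncomputable def divPart (p : ℕ) [Fact p.Prime] (A : Type*) [AddCommGroup A] [Module ℤ_[p] A] :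
    Submodule ℤ_[p] A :=
  sSup {D | IsDivisibleSubmodule p D}

abbrev Cotor (p : ℕ) [Fact p.Prime] (A : Type*) [AddCommGroup A] [Module ℤ_[p] A] :=
  A ⧸ divPart p A

/-- The `p`-adic Tate module `T_p(A) = lim← A[p^r]`, realized as the module of compatible
sequences `(a_r)_r` with `p^r • a_r = 0` and `p • a_{r+1} = a_r`. -/
def TateModule (p : ℕ) [Fact p.Prime] (A : Type*) [AddCommGroup A] [Module ℤ_[p] A] :
    Submodule ℤ_[p] (ℕ → A) where
  carrier := {a | ∀ r, (p : ℤ_[p]) ^ r • a r = 0 ∧ (p : ℤ_[p]) • a (r + 1) = a r}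
  add_mem' := by
    intro a b ha hb r
    refine ⟨?_, ?_⟩
    · show (p : ℤ_[p]) ^ r • (a r + b r) = 0
      rw [smul_add, (ha r).1, (hb r).1, add_zero]
    · show (p : ℤ_[p]) • (a (r + 1) + b (r + 1)) = a r + b r
      rw [smul_add, (ha r).2, (hb r).2]
  zero_mem' := by intro r; simp
  smul_mem' := by
    intro c a ha r
    refine ⟨?_, ?_⟩
    · show (p : ℤ_[p]) ^ r • c • a r = 0
      rw [smul_smul, mul_comm, ← smul_smul, (ha r).1, smul_zero]
    · show (p : ℤ_[p]) • c • a (r + 1) = c • a r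
      rw [smul_smul, mul_comm, ← smul_smul, (ha r).2]

section Test
variable {p : ℕ} [Fact p.Prime]

noncomputable def toE (p : ℕ) [Fact p.Prime] : ℚ_[p] →ₗ[ℤ_[p]] QpModZp p :=
  (LinearMap.range (Algebra.linearMap ℤ_[p] ℚ_[p])).mkQ

lemma toE_surjective : Function.Surjective (toE p) :=
  Submodule.mkQ_surjective _

lemma toE_eq_zero {q : ℚ_[p]} : toE p q = 0 ↔ ∃ z : ℤ_[p], (z : ℚ_[p]) = q := by
  rw [toE, Submodule.mkQ_apply, Submodule.Quotient.mk_eq_zero]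
  simp [LinearMap.mem_range]

lemma smul_toE (c : ℤ_[p]) (q : ℚ_[p]) : c • toE p q = toE p ((c : ℚ_[p]) * q) := by
  rw [← map_smul, Algebra.smul_def, PadicInt.algebraMap_apply]

lemma p_ne_zero_Q : (p : ℚ_[p]) ≠ 0 :=
  Nat.cast_ne_zero.mpr (Fact.out : p.Prime).ne_zero

lemma p_ne_zero_Z : (p : ℤ_[p]) ≠ 0 :=
  Nat.cast_ne_zero.mpr (Fact.out : p.Prime).ne_zero


lemma baerE : Module.Baer ℤ_[p] (QpModZp p) := by
  intro I g
  by_cases hI : I = ⊥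
  · subst hI
    refine ⟨0, fun x mem => ?_⟩
    have hx : x = 0 := by simpa using mem
    subst hx
    have h0 : (⟨0, mem⟩ : (⊥ : Ideal ℤ_[p])) = 0 := rfl
    rw [h0, map_zero, map_zero]
  · obtain ⟨k, hk⟩ := PadicInt.ideal_eq_span_pow_p hI
    have hmem : (p : ℤ_[p]) ^ k ∈ I := by
      rw [hk]; exact Ideal.mem_span_singleton_self _
    obtain ⟨q, hq⟩ := toE_surjective (g ⟨(p : ℤ_[p]) ^ k, hmem⟩)
    refine ⟨(toE p).comp (LinearMap.toSpanSingleton ℤ_[p] ℚ_[p] (q / (p : ℚ_[p]) ^ k)),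
      fun x mem => ?_⟩
    have hx : ∃ c : ℤ_[p], x = (p : ℤ_[p]) ^ k * c := by
      have := mem; rw [hk, Ideal.mem_span_singleton] at this
      obtain ⟨c, hc⟩ := this; exact ⟨c, hc⟩
    obtain ⟨c, rfl⟩ := hx
    have h1 : (⟨(p : ℤ_[p]) ^ k * c, mem⟩ : I) = c • ⟨(p : ℤ_[p]) ^ k, hmem⟩ := by
      apply Subtype.ext
      simp [mul_comm]
    rw [h1, map_smul, ← hq, smul_toE]
    simp only [LinearMap.comp_apply, LinearMap.toSpanSingleton_apply]
    congr 1
    rw [Algebra.smul_def, PadicInt.algebraMap_apply]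
    have hpk : ((p : ℚ_[p])) ^ k ≠ 0 := pow_ne_zero _ p_ne_zero_Q
    push_cast
    field_simp

/-- Every nonzero torsion element admits a linear functional to `QpModZp p` not vanishing on it. -/
lemma exists_sep {A : Type*} [AddCommGroup A] [Module ℤ_[p] A] {x : A} (hx : x ≠ 0)
    {r : ℕ} (hr : (p : ℤ_[p]) ^ r • x = 0) : ∃ φ : A →ₗ[ℤ_[p]] QpModZp p, φ x ≠ 0 := by
  classical
  set ρ := LinearMap.toSpanSingleton ℤ_[p] A x with hρ
  have hIbot : LinearMap.ker ρ ≠ ⊥ := by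
    intro h
    have hpr : (p : ℤ_[p]) ^ r ∈ LinearMap.ker ρ := by
      rw [LinearMap.mem_ker, hρ, LinearMap.toSpanSingleton_apply]; exact hr
    rw [h, Submodule.mem_bot] at hpr
    exact pow_ne_zero r p_ne_zero_Z hpr
  obtain ⟨k, hk⟩ := PadicInt.ideal_eq_span_pow_p hIbot
  have hk0 : k ≠ 0 := by
    rintro rfl
    have h1 : (1 : ℤ_[p]) ∈ LinearMap.ker ρ := by
      rw [hk]; simpa using Ideal.mem_span_singleton_self _
    rw [LinearMap.mem_ker, hρ, LinearMap.toSpanSingleton_apply, one_smul] at h1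
    exact hx h1
  set gE := (toE p).comp (LinearMap.toSpanSingleton ℤ_[p] ℚ_[p] (((p : ℚ_[p]) ^ k)⁻¹)) with hgE
  have hker : LinearMap.ker ρ ≤ LinearMap.ker gE := by
    intro c hc
    rw [hk, Ideal.mem_span_singleton] at hc
    obtain ⟨d, rfl⟩ := hc
    rw [LinearMap.mem_ker, hgE]
    simp only [LinearMap.comp_apply, LinearMap.toSpanSingleton_apply]
    rw [Algebra.smul_def, PadicInt.algebraMap_apply, toE_eq_zero]
    refine ⟨d, ?_⟩
    have hpk : ((p : ℚ_[p])) ^ k ≠ 0 := pow_ne_zero _ p_ne_zero_Q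
    push_cast
    rw [mul_comm, inv_mul_cancel_left₀ hpk]
  set fbar := Submodule.liftQ (LinearMap.ker ρ) ρ le_rfl with hfbar
  have hfbar_inj : Function.Injective fbar := by
    rw [← LinearMap.ker_eq_bot, hfbar]
    exact Submodule.ker_liftQ_eq_bot (LinearMap.ker ρ) ρ le_rfl le_rfl
  set gbar := Submodule.liftQ (LinearMap.ker ρ) gE hker with hgbar
  have hBaer : Module.Baer ℤ_[p] (QpModZp p) := baerE
  obtain ⟨h, hh⟩ := Module.Baer.extension_property (R := ℤ_[p]) (Q := QpModZp p)
    (M := ℤ_[p] ⧸ LinearMap.ker ρ) (N := A) hBaer fbar hfbar_inj gbar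
  refine ⟨h, ?_⟩
  have hx1 : x = fbar (Submodule.Quotient.mk 1) := by
    rw [hfbar, Submodule.liftQ_apply, hρ, LinearMap.toSpanSingleton_apply, one_smul]
  rw [hx1]
  have := DFunLike.congr_fun hh ((Submodule.Quotient.mk 1 : ℤ_[p] ⧸ LinearMap.ker ρ))
  simp only [LinearMap.coe_comp, Function.comp_apply] at this
  rw [this, hgbar, Submodule.liftQ_apply, hgE]
  simp only [LinearMap.comp_apply, LinearMap.toSpanSingleton_apply, one_smul]
  intro h0
  rw [toE_eq_zero] at h0
  obtain ⟨z, hz⟩ := h0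
  have hnorm : ‖(z : ℚ_[p])‖ ≤ 1 := z.2
  rw [hz, norm_inv, norm_pow, Padic.norm_p] at hnorm
  rw [inv_pow, inv_inv] at hnorm
  have hp1 : (1 : ℝ) < (p : ℝ) := by exact_mod_cast (Fact.out : p.Prime).one_lt
  have : (1 : ℝ) < (p : ℝ) ^ k := one_lt_pow₀ hp1 hk0
  linarith

lemma sep_span {A : Type*} [AddCommGroup A] [Module ℤ_[p] A] {n : ℕ}
    {S : Fin n → (A →ₗ[ℤ_[p]] QpModZp p)}
    (hS : Submodule.span ℤ_[p] (Set.range S) = ⊤) {x : A} {r : ℕ}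
    (hr : (p : ℤ_[p]) ^ r • x = 0) (h0 : ∀ i, S i x = 0) : x = 0 := by
  by_contra hx
  obtain ⟨φ, hφ⟩ := exists_sep hx hr
  have hall : ∀ ψ ∈ Submodule.span ℤ_[p] (Set.range S), ψ x = (0 : QpModZp p) := by
    intro ψ hψ
    induction hψ using Submodule.span_induction with
    | mem ψ hψ => obtain ⟨i, rfl⟩ := hψ; exact h0 i
    | zero => rfl
    | add ψ₁ ψ₂ _ _ h1 h2 => rw [LinearMap.add_apply, h1, h2, add_zero]
    | smul c ψ _ h1 => rw [LinearMap.smul_apply, h1, smul_zero]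
  exact hφ (hall φ (hS ▸ Submodule.mem_top))

lemma finite_E_torsion (r : ℕ) : {x : QpModZp p | (p : ℤ_[p]) ^ r • x = 0}.Finite := by
  have hpk : ((p : ℚ_[p])) ^ r ≠ 0 := pow_ne_zero _ p_ne_zero_Q
  apply Set.Finite.subset
    (Set.Finite.image (fun n : ℕ => toE p ((n : ℚ_[p]) * ((p : ℚ_[p]) ^ r)⁻¹))
      (Set.finite_Iio (p ^ r)))
  intro x hx
  obtain ⟨q, rfl⟩ := toE_surjective x
  have hx' : toE p (((p : ℤ_[p]) ^ r : ℤ_[p]) • q) = 0 := by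
    rw [map_smul]; exact hx
  rw [Algebra.smul_def, PadicInt.algebraMap_apply, toE_eq_zero] at hx'
  obtain ⟨z, hz⟩ := hx'
  have hspec := PadicInt.appr_spec r z
  rw [Ideal.mem_span_singleton] at hspec
  obtain ⟨w, hw⟩ := hspec
  have hcoe : (z : ℚ_[p]) - ((z.appr r : ℕ) : ℚ_[p]) = (p : ℚ_[p]) ^ r * (w : ℚ_[p]) := by
    have h2 := congrArg (fun t : ℤ_[p] => (t : ℚ_[p])) hw
    push_cast at h2
    exact h2
  have hq : q = (z : ℚ_[p]) * ((p : ℚ_[p]) ^ r)⁻¹ := by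
    have h' : ((z : ℚ_[p])) = (p : ℚ_[p]) ^ r * q := by
      rw [hz]; push_cast; ring
    rw [h']; field_simp
  refine ⟨z.appr r, PadicInt.appr_lt z r, ?_⟩
  show toE p (((z.appr r : ℕ) : ℚ_[p]) * ((p : ℚ_[p]) ^ r)⁻¹) = toE p q
  rw [← sub_eq_zero, ← map_sub, toE_eq_zero]
  refine ⟨-w, ?_⟩
  have happr : ((z.appr r : ℕ) : ℚ_[p]) = (z : ℚ_[p]) - (p : ℚ_[p]) ^ r * (w : ℚ_[p]) := by
    linear_combination -hcoe
  rw [happr, hq]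
  push_cast
  field_simp
  ring

lemma finite_torsion {A : Type*} [AddCommGroup A] [Module ℤ_[p] A]
    (hA : CofinGen p A) (r : ℕ) : {x : A | (p : ℤ_[p]) ^ r • x = 0}.Finite := by
  haveI : Module.Finite ℤ_[p] (A →ₗ[ℤ_[p]] QpModZp p) := hA
  obtain ⟨n, S, hS⟩ := Module.Finite.exists_fin (R := ℤ_[p]) (M := A →ₗ[ℤ_[p]] QpModZp p)
  have himg : ((fun x : A => fun i : Fin n => S i x) '' {x : A | (p : ℤ_[p]) ^ r • x = 0})
      ⊆ Set.pi Set.univ (fun _ : Fin n => {y : QpModZp p | (p : ℤ_[p]) ^ r • y = 0}) := by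
    rintro v ⟨x, hx, rfl⟩ i _
    show (p : ℤ_[p]) ^ r • S i x = 0
    rw [← map_smul, hx, map_zero]
  have hfin : ((fun x : A => fun i : Fin n => S i x) '' {x : A | (p : ℤ_[p]) ^ r • x = 0}).Finite :=
    Set.Finite.subset (Set.Finite.pi fun _ => finite_E_torsion r) himg
  apply Set.Finite.of_finite_image hfin
  intro x hx y hy hxy
  have hsub : (p : ℤ_[p]) ^ r • (x - y) = 0 := by
    rw [smul_sub, hx, hy, sub_zero]
  have hzero : ∀ i, S i (x - y) = 0 := by
    intro i
    rw [map_sub, sub_eq_zero]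
    exact congrFun hxy i
  have := sep_span hS hsub hzero
  exact sub_eq_zero.mp this

lemma cofinGen_quotient {A : Type*} [AddCommGroup A] [Module ℤ_[p] A]
    (hA : CofinGen p A) (D : Submodule ℤ_[p] A) : CofinGen p (A ⧸ D) := by
  haveI : Module.Finite ℤ_[p] (A →ₗ[ℤ_[p]] QpModZp p) := hA
  haveI : IsNoetherian ℤ_[p] (A →ₗ[ℤ_[p]] QpModZp p) :=
    isNoetherian_of_isNoetherianRing_of_finite ℤ_[p] _
  set κ : ((A ⧸ D) →ₗ[ℤ_[p]] QpModZp p) →ₗ[ℤ_[p]] (A →ₗ[ℤ_[p]] QpModZp p) :=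
    LinearMap.lcomp ℤ_[p] (QpModZp p) D.mkQ with hκ
  have hκinj : Function.Injective κ := by
    intro φ ψ h
    refine Submodule.linearMap_qext D ?_
    ext x
    exact DFunLike.congr_fun h x
  haveI := isNoetherian_of_injective κ hκinj
  exact ⟨IsNoetherian.noetherian ⊤⟩

lemma mem_range_psmul {A : Type*} [AddCommGroup A] [Module ℤ_[p] A] (c : ℤ_[p]) (x : A) :
    x ∈ LinearMap.range (c • (LinearMap.id : A →ₗ[ℤ_[p]] A)) ↔ ∃ y, c • y = x := by
  simp [LinearMap.mem_range]

/-- Key structure lemma: for a cofinitely generated module, the maximal divisible submodule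
equals `p^e A` for all large `e`. -/
lemma exists_stab {A : Type*} [AddCommGroup A] [Module ℤ_[p] A] (hA : CofinGen p A) :
    ∃ e₀ : ℕ, ∀ e, e₀ ≤ e →
      divPart p A = LinearMap.range ((p : ℤ_[p]) ^ e • (LinearMap.id : A →ₗ[ℤ_[p]] A)) := by
  classical
  haveI : Module.Finite ℤ_[p] (A →ₗ[ℤ_[p]] QpModZp p) := hA
  haveI : IsNoetherian ℤ_[p] (A →ₗ[ℤ_[p]] QpModZp p) :=
    isNoetherian_of_isNoetherianRing_of_finite ℤ_[p] _
  -- the ascending chain of `p^e`-torsion submodules of the dual stabilizes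
  set T : ℕ →o Submodule ℤ_[p] (A →ₗ[ℤ_[p]] QpModZp p) :=
    ⟨fun e => Submodule.torsionBy ℤ_[p] (A →ₗ[ℤ_[p]] QpModZp p) ((p : ℤ_[p]) ^ e), by
      intro a b hab φ hφ
      rw [Submodule.mem_torsionBy_iff] at hφ ⊢
      obtain ⟨k, rfl⟩ := Nat.exists_eq_add_of_le hab
      rw [pow_add, mul_comm, mul_smul, hφ, smul_zero]⟩ with hT
  obtain ⟨e₀, he₀⟩ := monotone_stabilizes_iff_noetherian.mpr inferInstance T
  -- key step : `p^(e₀+1) A = p^(e₀) A`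
  have hstep : ∀ x : A, ∃ y : A, (p : ℤ_[p]) ^ (e₀ + 1) • y = (p : ℤ_[p]) ^ e₀ • x := by
    intro x
    by_contra hcon
    push_neg at hcon
    set P := LinearMap.range ((p : ℤ_[p]) ^ (e₀ + 1) • (LinearMap.id : A →ₗ[ℤ_[p]] A)) with hP
    have hxne : (Submodule.Quotient.mk ((p : ℤ_[p]) ^ e₀ • x) : A ⧸ P) ≠ 0 := by
      rw [Ne, Submodule.Quotient.mk_eq_zero, hP, mem_range_psmul]
      push_neg
      exact hcon
    have htor : (p : ℤ_[p]) ^ (e₀ + 1) • (Submodule.Quotient.mk ((p : ℤ_[p]) ^ e₀ • x) : A ⧸ P)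
        = 0 := by
      rw [← Submodule.Quotient.mk_smul, Submodule.Quotient.mk_eq_zero, hP, mem_range_psmul]
      exact ⟨(p : ℤ_[p]) ^ e₀ • x, rfl⟩
    obtain ⟨φbar, hφbar⟩ := exists_sep hxne htor
    set φ : A →ₗ[ℤ_[p]] QpModZp p := φbar.comp P.mkQ with hφ
    have hφtor : φ ∈ T (e₀ + 1) := by
      rw [hT]
      show φ ∈ Submodule.torsionBy ℤ_[p] _ ((p : ℤ_[p]) ^ (e₀ + 1))
      rw [Submodule.mem_torsionBy_iff]
      ext z
      rw [LinearMap.smul_apply, ← map_smul, LinearMap.zero_apply, hφ, LinearMap.comp_apply]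
      have : ((p : ℤ_[p]) ^ (e₀ + 1) • z) ∈ P := by
        rw [hP, mem_range_psmul]; exact ⟨z, rfl⟩
      rw [Submodule.mkQ_apply, (Submodule.Quotient.mk_eq_zero P).mpr this, map_zero]
    have hφtor' : φ ∈ T e₀ := by rw [he₀ (e₀ + 1) (Nat.le_succ e₀)]; exact hφtor
    rw [hT] at hφtor'
    have hzero : (p : ℤ_[p]) ^ e₀ • φ = 0 := (Submodule.mem_torsionBy_iff _ _).mp hφtor'
    apply hφbar
    have := DFunLike.congr_fun hzero x
    rw [LinearMap.smul_apply, ← map_smul, LinearMap.zero_apply, hφ, LinearMap.comp_apply,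
      Submodule.mkQ_apply] at this
    exact this
  -- iterating
  have hiter : ∀ s : ℕ, ∀ x : A, ∃ y : A, (p : ℤ_[p]) ^ (e₀ + s) • y = (p : ℤ_[p]) ^ e₀ • x := by
    intro s
    induction s with
    | zero => exact fun x => ⟨x, rfl⟩
    | succ s ih =>
      intro x
      obtain ⟨y, hy⟩ := ih x
      obtain ⟨z, hz⟩ := hstep y
      refine ⟨z, ?_⟩
      have : (p : ℤ_[p]) ^ (e₀ + (s + 1)) • z = (p : ℤ_[p]) ^ s • ((p : ℤ_[p]) ^ (e₀ + 1) • z) := by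
        rw [smul_smul, ← pow_add]
        ring_nf
      rw [this, hz, smul_smul, ← pow_add]
      rw [show s + e₀ = e₀ + s from Nat.add_comm s e₀]
      exact hy
  set D := LinearMap.range ((p : ℤ_[p]) ^ e₀ • (LinearMap.id : A →ₗ[ℤ_[p]] A)) with hD
  have hDdiv : IsDivisibleSubmodule p D := by
    intro x hx
    rw [hD, mem_range_psmul] at hx
    obtain ⟨x', hx'⟩ := hx
    obtain ⟨y, hy⟩ := hstep x'
    refine ⟨(p : ℤ_[p]) ^ e₀ • y, by rw [hD, mem_range_psmul]; exact ⟨y, rfl⟩, ?_⟩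
    rw [smul_smul, ← pow_succ', hy, hx']
  have hDle : D ≤ divPart p A := le_sSup hDdiv
  have hledD : divPart p A ≤ D := by
    apply sSup_le
    intro D' hD'
    intro x hx
    have : ∀ k : ℕ, ∃ y ∈ D', (p : ℤ_[p]) ^ k • y = x := by
      intro k
      induction k with
      | zero => exact ⟨x, hx, by rw [pow_zero, one_smul]⟩
      | succ k ih =>
        obtain ⟨y, hy, hyx⟩ := ih
        obtain ⟨z, hz, hzy⟩ := hD' y hy
        exact ⟨z, hz, by rw [pow_succ, mul_smul, hzy, hyx]⟩
    obtain ⟨y, _, hyx⟩ := this e₀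
    rw [hD, mem_range_psmul]
    exact ⟨y, hyx⟩
  have hdivD : divPart p A = D := le_antisymm hledD hDle
  refine ⟨e₀, fun e he => ?_⟩
  obtain ⟨k, rfl⟩ := Nat.exists_eq_add_of_le he
  apply le_antisymm
  · rw [hdivD]
    intro x hx
    rw [hD, mem_range_psmul] at hx
    obtain ⟨y, hy⟩ := hx
    obtain ⟨z, hz⟩ := hiter k y
    rw [mem_range_psmul]
    exact ⟨z, by rw [hz, hy]⟩
  · rw [hdivD]
    intro x hx
    rw [mem_range_psmul] at hx
    obtain ⟨y, hy⟩ := hx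
    rw [hD, mem_range_psmul]
    refine ⟨(p : ℤ_[p]) ^ k • y, ?_⟩
    rw [smul_smul, ← pow_add, ← hy]

/-- A descending chain of nonempty subsets of a finite set has nonempty intersection. -/
lemma chain_inter {X : Type*} (C : ℕ → Set X) (hanti : ∀ k, C (k + 1) ⊆ C k)
    (hne : ∀ k, (C k).Nonempty) (hfin : (C 0).Finite) : (⋂ k, C k).Nonempty := by
  classical
  have hAnti : Antitone C := antitone_nat_of_succ_le hanti
  choose x hx using hne
  haveI : Finite (C 0) := hfin.to_subtype
  obtain ⟨b, hb⟩ := Finite.exists_infinite_fiber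
    (fun k : ℕ => (⟨x k, hAnti (Nat.zero_le k) (hx k)⟩ : C 0))
  refine ⟨b.1, Set.mem_iInter.mpr fun k => ?_⟩
  have hinf : ((fun k : ℕ => (⟨x k, hAnti (Nat.zero_le k) (hx k)⟩ : C 0)) ⁻¹' {b}).Infinite :=
    Set.infinite_coe_iff.mp hb
  obtain ⟨j, hj_mem, hj_gt⟩ := hinf.exists_gt k
  have hxj : x j = b.1 := congrArg Subtype.val hj_mem
  exact hxj ▸ hAnti hj_gt.le (hx j)

/-- Mittag-Leffler for `ℕ`-indexed systems of finite nonempty sets with transition map `F`. -/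
lemma ml {X : Type*} (F : X → X) (S : ℕ → Set X)
    (hfin : ∀ r, (S r).Finite) (hne : ∀ r, (S r).Nonempty)
    (hmap : ∀ r, ∀ x ∈ S (r + 1), F x ∈ S r) :
    ∃ s : ℕ → X, (∀ r, s r ∈ S r) ∧ ∀ r, F (s (r + 1)) = s r := by
  classical
  set Im : ℕ → ℕ → Set X := fun r k => F^[k] '' S (r + k) with hIm
  have hIm_anti : ∀ r k, Im r (k + 1) ⊆ Im r k := by
    rintro r k x ⟨y, hy, rfl⟩
    refine ⟨F y, hmap _ _ hy, ?_⟩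
    rw [Function.iterate_succ_apply]
  have hIm_ne : ∀ r k, (Im r k).Nonempty := fun r k => (hne (r + k)).image _
  have hIm0 : ∀ r, Im r 0 = S r := by intro r; simp [hIm]
  set Sinf : ℕ → Set X := fun r => ⋂ k, Im r k with hSinf
  have hSinf_ne : ∀ r, (Sinf r).Nonempty := fun r =>
    chain_inter _ (hIm_anti r) (hIm_ne r) ((hIm0 r) ▸ hfin r)
  have hSinf_sub : ∀ r, Sinf r ⊆ S r := fun r x hx => (hIm0 r) ▸ Set.mem_iInter.mp hx 0
  have hsurj : ∀ r, ∀ x ∈ Sinf r, ∃ y ∈ Sinf (r + 1), F y = x := by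
    intro r x hx
    set D : ℕ → Set X := fun k => {y | y ∈ Im (r + 1) k ∧ F y = x} with hDdef
    have hD_anti : ∀ k, D (k + 1) ⊆ D k := fun k y hy => ⟨hIm_anti (r + 1) k hy.1, hy.2⟩
    have hD_ne : ∀ k, (D k).Nonempty := by
      intro k
      have hx' : x ∈ Im r (k + 1) := Set.mem_iInter.mp hx (k + 1)
      obtain ⟨w, hw, hFw⟩ := hx'
      refine ⟨F^[k] w, ⟨⟨w, ?_, rfl⟩, ?_⟩⟩
      · have : r + (k + 1) = (r + 1) + k := by omega
        rw [← this]; exact hw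
      · rw [← Function.iterate_succ_apply' F k w]; exact hFw
    have hD_fin : (D 0).Finite := by
      apply Set.Finite.subset ((hIm0 (r + 1)) ▸ hfin (r + 1))
      intro y hy
      exact hy.1
    obtain ⟨y, hy⟩ := chain_inter D hD_anti hD_ne hD_fin
    refine ⟨y, Set.mem_iInter.mpr fun k => (Set.mem_iInter.mp hy k).1,
      (Set.mem_iInter.mp hy 0).2⟩
  -- build the sequence by recursion
  let g : ∀ r : ℕ, {z : X // z ∈ Sinf r} := fun r =>
    Nat.rec ⟨(hSinf_ne 0).choose, (hSinf_ne 0).choose_spec⟩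
      (fun n prev => ⟨(hsurj n prev.1 prev.2).choose, (hsurj n prev.1 prev.2).choose_spec.1⟩) r
  refine ⟨fun r => (g r).1, fun r => hSinf_sub r (g r).2, fun r => ?_⟩
  exact (hsurj r (g r).1 (g r).2).choose_spec.2

lemma mem_tate {A : Type*} [AddCommGroup A] [Module ℤ_[p] A] {a : ℕ → A} :
    a ∈ TateModule p A ↔ ∀ r, (p : ℤ_[p]) ^ r • a r = 0 ∧ (p : ℤ_[p]) • a (r + 1) = a r :=
  Iff.rfl

lemma tate_pow {A : Type*} [AddCommGroup A] [Module ℤ_[p] A] {a : ℕ → A}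
    (ha : a ∈ TateModule p A) (r s : ℕ) : (p : ℤ_[p]) ^ s • a (r + s) = a r := by
  induction s with
  | zero => rw [pow_zero, one_smul]; rfl
  | succ s ih =>
    have : r + (s + 1) = (r + s) + 1 := rfl
    rw [this, pow_succ, mul_smul, (ha (r + s)).2, ih]

/-- Functoriality of the Tate module. -/
noncomputable def tmap {A B : Type*} [AddCommGroup A] [Module ℤ_[p] A] [AddCommGroup B] [Module ℤ_[p] B]
    (h : A →ₗ[ℤ_[p]] B) : TateModule p A →ₗ[ℤ_[p]] TateModule p B where
  toFun t := ⟨fun r => h (t.1 r), by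
    intro r
    refine ⟨?_, ?_⟩
    · rw [← map_smul, (t.2 r).1, map_zero]
    · rw [← map_smul, (t.2 r).2]⟩
  map_add' t t' := by
    apply Subtype.ext
    funext r
    show h ((t + t').1 r) = h (t.1 r) + h (t'.1 r)
    rw [← map_add]
    rfl
  map_smul' c t := by
    apply Subtype.ext
    funext r
    show h ((c • t).1 r) = c • h (t.1 r)
    rw [← map_smul]
    rfl

lemma tmap_coe {A B : Type*} [AddCommGroup A] [Module ℤ_[p] A] [AddCommGroup B] [Module ℤ_[p] B]
    (h : A →ₗ[ℤ_[p]] B) (t : TateModule p A) (r : ℕ) : (tmap h t).1 r = h (t.1 r) := rfl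

/-- The canonical map `ℤ_[p] → T_p(QpModZp p)`. -/
noncomputable def psi : ℤ_[p] →ₗ[ℤ_[p]] TateModule p (QpModZp p) where
  toFun a := ⟨fun r => toE p ((a : ℚ_[p]) * ((p : ℚ_[p]) ^ r)⁻¹), by
    intro r
    have hpr : ((p : ℚ_[p])) ^ r ≠ 0 := pow_ne_zero _ p_ne_zero_Q
    have hpr1 : ((p : ℚ_[p])) ^ (r + 1) ≠ 0 := pow_ne_zero _ p_ne_zero_Q
    constructor
    · rw [smul_toE, toE_eq_zero]
      refine ⟨a, ?_⟩
      push_cast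
      field_simp
    · rw [smul_toE]
      congr 1
      push_cast
      field_simp
      ring⟩
  map_add' a b := by
    apply Subtype.ext
    funext r
    show toE p (((a + b : ℤ_[p]) : ℚ_[p]) * ((p : ℚ_[p]) ^ r)⁻¹) = _
    push_cast
    rw [add_mul, map_add]
    rfl
  map_smul' c a := by
    apply Subtype.ext
    funext r
    show toE p (((c * a : ℤ_[p]) : ℚ_[p]) * ((p : ℚ_[p]) ^ r)⁻¹)
      = c • toE p ((a : ℚ_[p]) * ((p : ℚ_[p]) ^ r)⁻¹)
    rw [smul_toE]
    push_cast
    ring_nf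

lemma psi_surjective : Function.Surjective (psi (p := p)) := by
  intro t
  have hpQ : (p : ℚ_[p]) ≠ 0 := p_ne_zero_Q
  have hq' : ∀ r, ∃ q : ℚ_[p], toE p q = t.1 r := fun r => toE_surjective (t.1 r)
  choose q hq using hq'
  have hz' : ∀ r, ∃ z : ℤ_[p], (z : ℚ_[p]) = (p : ℚ_[p]) ^ r * q r := by
    intro r
    have := (t.2 r).1
    rw [← hq r, smul_toE, toE_eq_zero] at this
    obtain ⟨z, hz⟩ := this
    refine ⟨z, ?_⟩
    rw [hz]; push_cast; ring
  choose z hz using hz'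
  have hw' : ∀ r, ∃ w : ℤ_[p], (w : ℚ_[p]) = (p : ℚ_[p]) * q (r + 1) - q r := by
    intro r
    have := (t.2 r).2
    rw [← hq r, ← hq (r + 1), smul_toE, ← sub_eq_zero, ← map_sub, toE_eq_zero] at this
    obtain ⟨w, hw⟩ := this
    refine ⟨w, ?_⟩
    rw [hw]; push_cast; ring
  choose w hw using hw'
  have hstep : ∀ r, z (r + 1) = z r + (p : ℤ_[p]) ^ r * w r := by
    intro r
    apply Subtype.coe_injective
    show ((z (r + 1) : ℤ_[p]) : ℚ_[p]) = ((z r + (p : ℤ_[p]) ^ r * w r : ℤ_[p]) : ℚ_[p])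
    push_cast
    rw [hz (r + 1), hz r, hw r]
    ring
  have hdiff : ∀ r s, ∃ u : ℤ_[p], z (r + s) - z r = (p : ℤ_[p]) ^ r * u := by
    intro r s
    induction s with
    | zero => exact ⟨0, by simp⟩
    | succ s ih =>
      obtain ⟨u, hu⟩ := ih
      refine ⟨u + (p : ℤ_[p]) ^ s * w (r + s), ?_⟩
      have : r + (s + 1) = (r + s) + 1 := rfl
      rw [this, hstep (r + s)]
      rw [show z (r + s) + (p:ℤ_[p]) ^ (r + s) * w (r + s) - z r
          = (z (r + s) - z r) + (p:ℤ_[p]) ^ (r + s) * w (r + s) from by ring, hu, pow_add]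
      ring
  have hp1R : (1 : ℝ) < (p : ℝ) := by exact_mod_cast (Fact.out : p.Prime).one_lt
  have hbound : ∀ n m N : ℕ, N ≤ n → N ≤ m → dist (z n) (z m) ≤ ((p : ℝ)⁻¹) ^ N := by
    have key : ∀ n m : ℕ, n ≤ m → ‖z m - z n‖ ≤ ((p : ℝ)⁻¹) ^ n := by
      intro n m hnm
      obtain ⟨s, rfl⟩ := Nat.exists_eq_add_of_le hnm
      obtain ⟨u, hu⟩ := hdiff n s
      rw [hu, norm_mul, norm_pow, PadicInt.norm_p]
      calc ((p:ℝ)⁻¹) ^ n * ‖u‖ ≤ ((p:ℝ)⁻¹) ^ n * 1 := by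
            apply mul_le_mul_of_nonneg_left u.2 (by positivity)
        _ = ((p:ℝ)⁻¹) ^ n := mul_one _
    intro n m N hN hM
    rcases le_total n m with h | h
    · rw [dist_eq_norm, ← norm_neg, neg_sub]
      calc ‖z m - z n‖ ≤ ((p:ℝ)⁻¹) ^ n := key n m h
        _ ≤ ((p:ℝ)⁻¹) ^ N := pow_le_pow_of_le_one (by positivity) (by
            rw [inv_le_one_iff₀]; right; linarith) hN
    · rw [dist_eq_norm]
      calc ‖z n - z m‖ ≤ ((p:ℝ)⁻¹) ^ m := key m n h
        _ ≤ ((p:ℝ)⁻¹) ^ N := pow_le_pow_of_le_one (by positivity) (by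
            rw [inv_le_one_iff₀]; right; linarith) hM
  have hcauchy : CauchySeq z := by
    apply cauchySeq_of_le_tendsto_0 (fun N => ((p : ℝ)⁻¹) ^ N) hbound
    apply tendsto_pow_atTop_nhds_zero_of_lt_one (by positivity)
    rw [inv_lt_one_iff₀]; right; exact hp1R
  obtain ⟨a, ha⟩ := cauchySeq_tendsto_of_complete hcauchy
  have hdvd : ∀ r, ∃ u : ℤ_[p], a - z r = (p : ℤ_[p]) ^ r * u := by
    intro r
    have htend : Filter.Tendsto (fun m => ‖z m - z r‖) Filter.atTop (nhds ‖a - z r‖) :=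
      ((ha.sub tendsto_const_nhds).norm)
    have hle : ‖a - z r‖ ≤ ((p : ℝ)⁻¹) ^ r := by
      apply le_of_tendsto htend
      filter_upwards [Filter.eventually_ge_atTop r] with m hm
      have := hbound m r r hm le_rfl
      rwa [dist_eq_norm] at this
    have : ‖a - z r‖ ≤ (p : ℝ) ^ (-(r : ℤ)) := by
      rwa [zpow_neg, zpow_natCast, ← inv_pow]
    rw [PadicInt.norm_le_pow_iff_mem_span_pow, Ideal.mem_span_singleton] at this
    obtain ⟨u, hu⟩ := this
    exact ⟨u, hu⟩
  have : psi a = t := by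
    apply Subtype.ext
    funext r
    show toE p ((a : ℚ_[p]) * ((p : ℚ_[p]) ^ r)⁻¹) = t.1 r
    rw [← hq r, ← sub_eq_zero, ← map_sub, toE_eq_zero]
    obtain ⟨u, hu⟩ := hdvd r
    refine ⟨u, ?_⟩
    have hpr : ((p : ℚ_[p])) ^ r ≠ 0 := pow_ne_zero _ hpQ
    have hcast : (a : ℚ_[p]) - (z r : ℚ_[p]) = (p : ℚ_[p]) ^ r * (u : ℚ_[p]) := by
      have := congrArg (fun t : ℤ_[p] => (t : ℚ_[p])) hu
      push_cast at this
      exact this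
    have hqr : q r = (z r : ℚ_[p]) * ((p : ℚ_[p]) ^ r)⁻¹ := by
      rw [hz r]; field_simp
    rw [hqr]
    field_simp at hcast ⊢
    linear_combination -hcast
  exact ⟨a, this⟩

lemma finite_tate {A : Type*} [AddCommGroup A] [Module ℤ_[p] A] (hA : CofinGen p A) :
    Module.Finite ℤ_[p] (TateModule p A) := by
  classical
  haveI : Module.Finite ℤ_[p] (A →ₗ[ℤ_[p]] QpModZp p) := hA
  obtain ⟨n, S, hS⟩ := Module.Finite.exists_fin (R := ℤ_[p]) (M := A →ₗ[ℤ_[p]] QpModZp p)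
  set Θ : TateModule p A →ₗ[ℤ_[p]] (Fin n → TateModule p (QpModZp p)) :=
    LinearMap.pi (fun i => tmap (S i)) with hΘ
  have hΘinj : Function.Injective Θ := by
    rw [← LinearMap.ker_eq_bot]
    apply (Submodule.eq_bot_iff _).mpr
    intro t ht
    rw [LinearMap.mem_ker, hΘ] at ht
    apply Subtype.ext
    funext r
    show t.1 r = 0
    apply sep_span hS (t.2 r).1
    intro i
    have h1 : tmap (S i) t = 0 := congrFun ht i
    have h2 : (tmap (S i) t).1 r = 0 := by rw [h1]; rfl
    rwa [tmap_coe] at h2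
  haveI : Module.Finite ℤ_[p] (TateModule p (QpModZp p)) :=
    Module.Finite.of_surjective psi psi_surjective
  haveI : IsNoetherian ℤ_[p] (Fin n → TateModule p (QpModZp p)) :=
    isNoetherian_of_isNoetherianRing_of_finite ℤ_[p] _
  haveI := isNoetherian_of_injective Θ hΘinj
  exact ⟨IsNoetherian.noetherian ⊤⟩

lemma cotor_finite {A : Type*} [AddCommGroup A] [Module ℤ_[p] A] (hA : CofinGen p A) :
    Module.Finite ℤ_[p] (Cotor p A) := by
  obtain ⟨e₀, he⟩ := exists_stab hA
  have htor : ∀ y : Cotor p A, (p : ℤ_[p]) ^ e₀ • y = 0 := by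
    intro y
    obtain ⟨x, rfl⟩ := Submodule.mkQ_surjective (divPart p A) y
    rw [Submodule.mkQ_apply, ← Submodule.Quotient.mk_smul, Submodule.Quotient.mk_eq_zero]
    rw [he e₀ le_rfl, mem_range_psmul]
    exact ⟨x, rfl⟩
  have hfin : {y : Cotor p A | (p : ℤ_[p]) ^ e₀ • y = 0}.Finite :=
    finite_torsion (cofinGen_quotient hA (divPart p A)) e₀
  have huniv : (Set.univ : Set (Cotor p A)).Finite :=
    hfin.subset (fun y _ => htor y)
  haveI : Finite (Cotor p A) := Set.finite_univ_iff.mp huniv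
  infer_instance

end Test

/-- Lemma 1.3 (1), second part: for a short exact sequence `0 → L → M → N → 0` of cofinitely
generated `ℤ_p`-modules, taking projective limits of the torsion exact sequences yields an
exact sequence of finitely generated `ℤ_p`-modules
`0 → T_p(L) → T_p(M) → T_p(N) → Cotor L → Cotor M → Cotor N → 0`. -/
theorem stmt1 {p : ℕ} [Fact p.Prime]
    {L M N : Type*} [AddCommGroup L] [Module ℤ_[p] L] [AddCommGroup M] [Module ℤ_[p] M]
    [AddCommGroup N] [Module ℤ_[p] N]
    (f : L →ₗ[ℤ_[p]] M) (g : M →ₗ[ℤ_[p]] N)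
    (hf : Function.Injective f) (hg : Function.Surjective g)
    (hfg : LinearMap.range f = LinearMap.ker g)
    (hL : CofinGen p L) (hM : CofinGen p M) (hN : CofinGen p N) :
    ∃ (Tf : TateModule p L →ₗ[ℤ_[p]] TateModule p M)
      (Tg : TateModule p M →ₗ[ℤ_[p]] TateModule p N)
      (δ : TateModule p N →ₗ[ℤ_[p]] Cotor p L)
      (fc : Cotor p L →ₗ[ℤ_[p]] Cotor p M)
      (gc : Cotor p M →ₗ[ℤ_[p]] Cotor p N),
      (∀ (a : TateModule p L) (r : ℕ), ((Tf a : ℕ → M) r) = f ((a : ℕ → L) r)) ∧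
      (∀ (a : TateModule p M) (r : ℕ), ((Tg a : ℕ → N) r) = g ((a : ℕ → M) r)) ∧
      (∀ x : L, fc (Submodule.Quotient.mk x) = Submodule.Quotient.mk (f x)) ∧
      (∀ x : M, gc (Submodule.Quotient.mk x) = Submodule.Quotient.mk (g x)) ∧
      Function.Injective Tf ∧
      Function.Exact Tf Tg ∧
      Function.Exact Tg δ ∧
      Function.Exact δ fc ∧
      Function.Exact fc gc ∧
      Function.Surjective gc ∧
      Module.Finite ℤ_[p] (TateModule p L) ∧
      Module.Finite ℤ_[p] (TateModule p M) ∧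
      Module.Finite ℤ_[p] (TateModule p N) ∧
      Module.Finite ℤ_[p] (Cotor p L) ∧
      Module.Finite ℤ_[p] (Cotor p M) ∧
      Module.Finite ℤ_[p] (Cotor p N) := by
  classical
  obtain ⟨eL, heL⟩ := exists_stab hL
  obtain ⟨eM, heM⟩ := exists_stab hM
  obtain ⟨eN, heN⟩ := exists_stab hN
  set e := max eL (max eM eN) with he_def
  have heL' : divPart p L = LinearMap.range ((p : ℤ_[p]) ^ e • (LinearMap.id : L →ₗ[ℤ_[p]] L)) :=
    heL e (le_max_left _ _)
  have heM' : divPart p M = LinearMap.range ((p : ℤ_[p]) ^ e • (LinearMap.id : M →ₗ[ℤ_[p]] M)) :=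
    heM e (le_trans (le_max_left _ _) (le_max_right _ _))
  have heN' : divPart p N = LinearMap.range ((p : ℤ_[p]) ^ e • (LinearMap.id : N →ₗ[ℤ_[p]] N)) :=
    heN e (le_trans (le_max_right _ _) (le_max_right _ _))
  have hLdeep : ∀ k : ℕ, ∀ x ∈ divPart p L, ∃ y, (p : ℤ_[p]) ^ k • y = x := by
    intro k x hx
    rw [heL (max k eL) (le_max_right _ _), mem_range_psmul] at hx
    obtain ⟨y, hy⟩ := hx
    obtain ⟨s, hs⟩ := Nat.exists_eq_add_of_le (le_max_left k eL)
    refine ⟨(p : ℤ_[p]) ^ s • y, ?_⟩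
    rw [smul_smul, ← pow_add, ← hs, hy]
  have hMdeep : ∀ k : ℕ, ∀ x ∈ divPart p M, ∃ y, (p : ℤ_[p]) ^ k • y = x := by
    intro k x hx
    rw [heM (max k eM) (le_max_right _ _), mem_range_psmul] at hx
    obtain ⟨y, hy⟩ := hx
    obtain ⟨s, hs⟩ := Nat.exists_eq_add_of_le (le_max_left k eM)
    refine ⟨(p : ℤ_[p]) ^ s • y, ?_⟩
    rw [smul_smul, ← pow_add, ← hs, hy]
  have hle_f : divPart p L ≤ Submodule.comap f (divPart p M) := by
    intro x hx
    rw [heL', mem_range_psmul] at hx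
    obtain ⟨y, rfl⟩ := hx
    rw [Submodule.mem_comap, map_smul, heM', mem_range_psmul]
    exact ⟨f y, rfl⟩
  have hle_g : divPart p M ≤ Submodule.comap g (divPart p N) := by
    intro x hx
    rw [heM', mem_range_psmul] at hx
    obtain ⟨y, rfl⟩ := hx
    rw [Submodule.mem_comap, map_smul, heN', mem_range_psmul]
    exact ⟨g y, rfl⟩
  set fc := Submodule.mapQ (divPart p L) (divPart p M) f hle_f with hfc
  set gc := Submodule.mapQ (divPart p M) (divPart p N) g hle_g with hgc
  have hgf : ∀ l : L, g (f l) = 0 := by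
    intro l
    have : f l ∈ LinearMap.ker g := hfg ▸ LinearMap.mem_range_self f l
    exact LinearMap.mem_ker.mp this
  have hker_range : ∀ m : M, g m = 0 → ∃ l, f l = m := by
    intro m hm
    have : m ∈ LinearMap.range f := hfg ▸ LinearMap.mem_ker.mpr hm
    exact LinearMap.mem_range.mp this
  have hδex : ∀ t : TateModule p N, ∃ lm : L × M,
      g lm.2 = t.1 e ∧ f lm.1 = (p : ℤ_[p]) ^ e • lm.2 := by
    intro t
    obtain ⟨m, hm⟩ := hg (t.1 e)
    have h0 : g ((p : ℤ_[p]) ^ e • m) = 0 := by rw [map_smul, hm, (t.2 e).1]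
    obtain ⟨l, hl⟩ := hker_range _ h0
    exact ⟨(l, m), hm, hl⟩
  set δ₀ : TateModule p N → Cotor p L :=
    fun t => Submodule.Quotient.mk (hδex t).choose.1 with hδ₀
  have hchar : ∀ (t : TateModule p N) (m : M) (l : L), g m = t.1 e →
      f l = (p : ℤ_[p]) ^ e • m → δ₀ t = Submodule.Quotient.mk l := by
    intro t m l hm hl
    obtain ⟨hm₀, hl₀⟩ := (hδex t).choose_spec
    have hgm : g (m - (hδex t).choose.2) = 0 := by rw [map_sub, hm, hm₀, sub_self]
    obtain ⟨u, hu⟩ := hker_range _ hgm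
    have hfl : f (l - (hδex t).choose.1) = f ((p : ℤ_[p]) ^ e • u) := by
      rw [map_sub, hl, hl₀, map_smul, hu, smul_sub]
    have hkey : l - (hδex t).choose.1 = (p : ℤ_[p]) ^ e • u := hf hfl
    show Submodule.Quotient.mk (hδex t).choose.1 = Submodule.Quotient.mk l
    rw [Submodule.Quotient.eq]
    rw [heL', mem_range_psmul]
    refine ⟨-u, ?_⟩
    rw [smul_neg, ← hkey, neg_sub]
  have hchar' : ∀ (t : TateModule p N) (r : ℕ) (m : M) (l : L), e ≤ r → g m = t.1 r →
      f l = (p : ℤ_[p]) ^ r • m → δ₀ t = Submodule.Quotient.mk l := by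
    intro t r m l her hm hl
    obtain ⟨s, rfl⟩ := Nat.exists_eq_add_of_le her
    apply hchar t ((p : ℤ_[p]) ^ s • m) l
    · rw [map_smul, hm]
      exact tate_pow t.2 e s
    · rw [smul_smul, ← pow_add]
      exact hl
  have hadd : ∀ t t', δ₀ (t + t') = δ₀ t + δ₀ t' := by
    intro t t'
    obtain ⟨hm₁, hl₁⟩ := (hδex t).choose_spec
    obtain ⟨hm₂, hl₂⟩ := (hδex t').choose_spec
    have h := hchar (t + t') ((hδex t).choose.2 + (hδex t').choose.2)
      ((hδex t).choose.1 + (hδex t').choose.1)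
      (by rw [map_add, hm₁, hm₂]; rfl)
      (by rw [map_add, hl₁, hl₂, smul_add])
    rw [h, hδ₀]
    exact Submodule.Quotient.mk_add _
  have hsmul : ∀ (c : ℤ_[p]) (t : TateModule p N), δ₀ (c • t) = c • δ₀ t := by
    intro c t
    obtain ⟨hm₁, hl₁⟩ := (hδex t).choose_spec
    have h := hchar (c • t) (c • (hδex t).choose.2) (c • (hδex t).choose.1)
      (by rw [map_smul, hm₁]; rfl)
      (by rw [map_smul, hl₁, smul_comm])
    rw [h, hδ₀]
    exact Submodule.Quotient.mk_smul _ _ _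
  set δ : TateModule p N →ₗ[ℤ_[p]] Cotor p L :=
    { toFun := δ₀, map_add' := hadd, map_smul' := hsmul } with hδdef
  refine ⟨tmap f, tmap g, δ, fc, gc, ?_, ?_, ?_, ?_, ?_, ?_, ?_, ?_, ?_, ?_, ?_, ?_, ?_, ?_, ?_, ?_⟩
  · intro a r; rfl
  · intro a r; rfl
  · intro x; rw [hfc]; exact Submodule.mapQ_apply _ _ f x
  · intro x; rw [hgc]; exact Submodule.mapQ_apply _ _ g x
  · -- injectivity of Tf
    intro a b hab
    apply Subtype.ext
    funext r
    exact hf (congrFun (congrArg Subtype.val hab) r)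
  · -- exact Tf Tg
    intro t
    constructor
    · intro ht
      have hcomp : ∀ r, g (t.1 r) = 0 := fun r => congrFun (congrArg Subtype.val ht) r
      choose l hlr using fun r => hker_range _ (hcomp r)
      have hmem : l ∈ TateModule p L := by
        intro r
        constructor
        · apply hf
          rw [map_smul, hlr r, map_zero]
          exact (t.2 r).1
        · apply hf
          rw [map_smul, hlr (r + 1), hlr r]
          exact (t.2 r).2
      exact ⟨⟨l, hmem⟩, Subtype.ext (funext fun r => hlr r)⟩
    · rintro ⟨s, rfl⟩
      apply Subtype.ext
      funext r
      exact hgf (s.1 r)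
  · -- exact Tg δ
    intro t
    constructor
    · intro hδt
      have hδt' : δ₀ t = 0 := hδt
      have hSne : ∀ r, ∃ m : M, g m = t.1 r ∧ (p : ℤ_[p]) ^ r • m = 0 := by
        intro r
        obtain ⟨m', hm'⟩ := hg (t.1 (r + e))
        have h0 : g ((p : ℤ_[p]) ^ (r + e) • m') = 0 := by
          rw [map_smul, hm', (t.2 (r + e)).1]
        obtain ⟨l', hl'⟩ := hker_range _ h0
        have hl'0 : Submodule.Quotient.mk l' = (0 : Cotor p L) := by
          rw [← hchar' t (r + e) m' l' (Nat.le_add_left e r) hm' hl']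
          exact hδt'
        rw [Submodule.Quotient.mk_eq_zero] at hl'0
        obtain ⟨u, hu⟩ := hLdeep (r + e) l' hl'0
        refine ⟨(p : ℤ_[p]) ^ e • (m' - f u), ?_, ?_⟩
        · rw [map_smul, map_sub, hm', hgf u, sub_zero]
          exact tate_pow t.2 r e
        · rw [smul_smul, ← pow_add, smul_sub, ← hl', ← map_smul, hu, sub_self]
      obtain ⟨s, hs_mem, hs_comp⟩ := ml (fun m : M => (p : ℤ_[p]) • m)
        (fun r => {m : M | g m = t.1 r ∧ (p : ℤ_[p]) ^ r • m = 0})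
        (fun r => Set.Finite.subset (finite_torsion hM r) (fun m hm => hm.2))
        (fun r => hSne r)
        (by
          rintro r m ⟨hm1, hm2⟩
          refine ⟨?_, ?_⟩
          · show g ((p : ℤ_[p]) • m) = t.1 r
            rw [map_smul, hm1]
            exact (t.2 r).2
          · show (p : ℤ_[p]) ^ r • (p : ℤ_[p]) • m = 0
            rw [smul_smul, ← pow_succ]
            exact hm2)
      have hmem : s ∈ TateModule p M := fun r => ⟨(hs_mem r).2, hs_comp r⟩
      exact ⟨⟨s, hmem⟩, Subtype.ext (funext fun r => (hs_mem r).1)⟩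
    · rintro ⟨sM, rfl⟩
      show δ₀ (tmap g sM) = 0
      have h := hchar (tmap g sM) (sM.1 e) 0 rfl (by rw [map_zero, (sM.2 e).1])
      rw [h]
      exact Submodule.Quotient.mk_zero _
  · -- exact δ fc
    intro x
    constructor
    · intro hx0
      obtain ⟨l, rfl⟩ := Submodule.mkQ_surjective (divPart p L) x
      rw [Submodule.mkQ_apply] at hx0 ⊢
      have hfl : f l ∈ divPart p M := by
        rw [hfc, Submodule.mapQ_apply, Submodule.Quotient.mk_eq_zero] at hx0
        exact hx0
      have hUne : ∀ r, ∃ nn : N, ∃ m : M, g m = nn ∧ (p : ℤ_[p]) ^ r • m = f l := by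
        intro r
        obtain ⟨m, hm⟩ := hMdeep r (f l) hfl
        exact ⟨g m, m, rfl, hm⟩
      obtain ⟨ν, hν_mem, hν_comp⟩ := ml (fun nn : N => (p : ℤ_[p]) • nn)
        (fun r => {nn : N | ∃ m : M, g m = nn ∧ (p : ℤ_[p]) ^ r • m = f l})
        (fun r => Set.Finite.subset (finite_torsion hN r) (by
          rintro nn ⟨m, hgm, hsm⟩
          show (p : ℤ_[p]) ^ r • nn = 0
          rw [← hgm, ← map_smul, hsm, hgf l]))
        (fun r => hUne r)
        (by
          rintro r nn ⟨m, hgm, hsm⟩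
          refine ⟨(p : ℤ_[p]) • m, ?_, ?_⟩
          · rw [map_smul, hgm]
          · rw [smul_smul, ← pow_succ]
            exact hsm)
      have hνtor : ∀ r, (p : ℤ_[p]) ^ r • ν r = 0 := by
        intro r
        obtain ⟨m, hgm, hsm⟩ := hν_mem r
        rw [← hgm, ← map_smul, hsm, hgf l]
      have hνmem : ν ∈ TateModule p N := fun r => ⟨hνtor r, hν_comp r⟩
      obtain ⟨m, hgm, hsm⟩ := hν_mem e
      exact ⟨⟨ν, hνmem⟩, hchar ⟨ν, hνmem⟩ m l hgm hsm.symm⟩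
    · rintro ⟨t, rfl⟩
      show fc (δ₀ t) = 0
      obtain ⟨hm₀, hl₀⟩ := (hδex t).choose_spec
      rw [hδ₀, hfc, Submodule.mapQ_apply, Submodule.Quotient.mk_eq_zero, hl₀, heM',
        mem_range_psmul]
      exact ⟨(hδex t).choose.2, rfl⟩
  · -- exact fc gc
    intro x
    constructor
    · intro hx0
      obtain ⟨m, rfl⟩ := Submodule.mkQ_surjective (divPart p M) x
      rw [Submodule.mkQ_apply] at hx0 ⊢
      have hgm : g m ∈ divPart p N := by
        rw [hgc, Submodule.mapQ_apply, Submodule.Quotient.mk_eq_zero] at hx0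
        exact hx0
      rw [heN', mem_range_psmul] at hgm
      obtain ⟨n', hn'⟩ := hgm
      obtain ⟨m', hm'⟩ := hg n'
      have h0 : g (m - (p : ℤ_[p]) ^ e • m') = 0 := by
        rw [map_sub, map_smul, hm', hn', sub_self]
      obtain ⟨l, hl⟩ := hker_range _ h0
      refine ⟨Submodule.Quotient.mk l, ?_⟩
      rw [hfc, Submodule.mapQ_apply, Submodule.Quotient.eq]
      rw [heM', mem_range_psmul]
      refine ⟨-m', ?_⟩
      rw [smul_neg, hl]
      abel
    · rintro ⟨y, rfl⟩
      obtain ⟨l, rfl⟩ := Submodule.mkQ_surjective (divPart p L) y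
      rw [Submodule.mkQ_apply, hfc, hgc, Submodule.mapQ_apply, Submodule.mapQ_apply, hgf l]
      exact Submodule.Quotient.mk_zero _
  · -- surjective gc
    intro x
    obtain ⟨nn, rfl⟩ := Submodule.mkQ_surjective (divPart p N) x
    obtain ⟨m, rfl⟩ := hg nn
    exact ⟨Submodule.Quotient.mk m, by rw [hgc, Submodule.mkQ_apply, Submodule.mapQ_apply]⟩
  · exact finite_tate hL
  · exact finite_tate hM
  · exact finite_tate hN
  · exact cotor_finite hL
  · exact cotor_finite hM
  · exact cotor_finite hN
end

section
/- Let 0 → L → M → N → 0 be a short exact sequence of Z_p-modules such that L_Div is cofinitely generated and Cotor(L) has finite exponent. Then for any divisible subgroup D ⊆ N, letting D' ⊆ M be its preimage, the induced map (D')_Div → D is surjective. In particular, the natural map M_Div → N_Div is surjective. -/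
section helpers
variable {p : ℕ} [Fact p.Prime] {A B : Type*} [AddCommGroup A] [Module ℤ_[p] A]
  [AddCommGroup B] [Module ℤ_[p] B]

lemma isDiv_map (φ : A →ₗ[ℤ_[p]] B) {D : Submodule ℤ_[p] A} (h : IsDivisibleSubmodule p D) :
    IsDivisibleSubmodule p (D.map φ) := by
  rintro _ ⟨x, hx, rfl⟩
  obtain ⟨y, hy, rfl⟩ := h x hx
  exact ⟨φ y, ⟨y, hy, rfl⟩, by simp⟩

lemma div_le_map (D : Submodule ℤ_[p] A) (h : IsDivisibleSubmodule p D) :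
    D ≤ D.map ((p : ℤ_[p]) • (LinearMap.id : A →ₗ[ℤ_[p]] A)) := by
  intro x hx
  obtain ⟨y, hy, hxy⟩ := h x hx
  exact ⟨y, hy, by simpa using hxy⟩

lemma isDiv_divPart : IsDivisibleSubmodule p (divPart p A) := by
  have key : divPart p A ≤ (divPart p A).map ((p : ℤ_[p]) • (LinearMap.id : A →ₗ[ℤ_[p]] A)) := by
    unfold divPart
    rw [sSup_eq_iSup', Submodule.map_iSup]
    exact iSup_mono fun D => div_le_map D.1 D.2
  intro x hx
  obtain ⟨y, hy, hxy⟩ := key hx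
  exact ⟨y, hy, by simpa using hxy⟩

lemma le_divPart {D : Submodule ℤ_[p] A} (h : IsDivisibleSubmodule p D) : D ≤ divPart p A :=
  le_sSup h

lemma isDiv_comap_subtype (W : Submodule ℤ_[p] A) {D : Submodule ℤ_[p] A}
    (hle : D ≤ W) (h : IsDivisibleSubmodule p D) :
    IsDivisibleSubmodule p (D.comap W.subtype) := by
  rintro ⟨x, hxW⟩ hx
  obtain ⟨y, hy, hxy⟩ := h x hx
  exact ⟨⟨y, hle hy⟩, hy, by ext; simpa using hxy⟩

lemma isUnit_coprime {r : ℕ} (hr : ¬ (p ∣ r)) : IsUnit (r : ℤ_[p]) := by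
  rw [PadicInt.isUnit_iff]
  refine le_antisymm (PadicInt.norm_le_one _) ?_
  by_contra hlt
  push_neg at hlt
  have h2 : ‖((r : ℤ) : ℤ_[p])‖ < 1 := by push_cast; exact hlt
  rw [PadicInt.norm_int_lt_one_iff_dvd] at h2
  exact hr (Int.ofNat_dvd.mp h2)

end helpers

/-- Lemma 1.3 (3): let `0 → L → M → N → 0` be a short exact sequence of `ℤ_p`-modules such
that `L_Div` is cofinitely generated and `Cotor(L)` has finite exponent.  Then for any
divisible subgroup `D ⊆ N` with preimage `D' ⊆ M`, the induced map `(D')_Div → D` is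
surjective.  In particular `M_Div → N_Div` is surjective. -/
theorem stmt3 {p : ℕ} [Fact p.Prime]
    {L M N : Type*} [AddCommGroup L] [Module ℤ_[p] L] [AddCommGroup M] [Module ℤ_[p] M]
    [AddCommGroup N] [Module ℤ_[p] N]
    (f : L →ₗ[ℤ_[p]] M) (g : M →ₗ[ℤ_[p]] N)
    (hf : Function.Injective f) (hg : Function.Surjective g)
    (hfg : LinearMap.range f = LinearMap.ker g)
    (hLdiv : CofinGen p (divPart p L))
    (hLcot : ∃ n : ℕ, 0 < n ∧ ∀ x : Cotor p L, n • x = 0) :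
    (∀ D : Submodule ℤ_[p] N, IsDivisibleSubmodule p D →
      ∀ d ∈ D, ∃ x : Submodule.comap g D,
        x ∈ divPart p (Submodule.comap g D) ∧ g (x : M) = d) ∧
    (∀ y ∈ divPart p N, ∃ x ∈ divPart p M, g x = y) := by
  obtain ⟨n, hn, hkill⟩ := hLcot
  set k := n.factorization p with hk
  set r := n / p ^ k with hrdef
  have hnrk : n = p ^ k * r := (Nat.ordProj_mul_ordCompl_eq_self n p).symm
  have hrp : ¬ p ∣ r := Nat.not_dvd_ordCompl Fact.out hn.ne'
  obtain ⟨u, hu⟩ := isUnit_coprime hrp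
  have hcast : (n : ℤ_[p]) = (p : ℤ_[p]) ^ k * (r : ℤ_[p]) := by
    rw [hnrk]; push_cast; ring
  -- every n-multiple in L is divisible
  have hdivL : ∀ l : L, (n : ℤ_[p]) • l ∈ divPart p L := by
    intro l
    have h0 : (n : ℤ_[p]) • (Submodule.Quotient.mk l : Cotor p L) = 0 := by
      rw [Nat.cast_smul_eq_nsmul]; exact hkill _
    rwa [← Submodule.Quotient.mk_smul, Submodule.Quotient.mk_eq_zero] at h0
  choose m hm using hg
  have main : ∀ D : Submodule ℤ_[p] N, IsDivisibleSubmodule p D →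
      ∀ d ∈ D, ∃ x : Submodule.comap g D,
        x ∈ divPart p (Submodule.comap g D) ∧ g (x : M) = d := by
    intro D hD d hd
    choose Fd hmem hspec using hD
    let G : ↥D → ↥D := fun x => ⟨Fd x.1 x.2, hmem _ _⟩
    let dseq : ℕ → ↥D := fun i => Nat.rec (motive := fun _ => ↥D) ⟨d, hd⟩ (fun _ x => G x) i
    have hd0 : ((dseq 0 : ↥D) : N) = d := rfl
    have hstep : ∀ i, (p : ℤ_[p]) • ((dseq (i+1) : ↥D) : N) = ((dseq i : ↥D) : N) :=
      fun i => hspec _ _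
    let ms : ℕ → M := fun i => m ((dseq i : ↥D) : N)
    have hgm : ∀ i, g (ms i) = ((dseq i : ↥D) : N) := fun i => hm _
    set F : Submodule ℤ_[p] M := (divPart p L).map f with hF
    have hFdiv : IsDivisibleSubmodule p F := isDiv_map f isDiv_divPart
    set ys : ℕ → M := fun i => (n : ℤ_[p]) • ms i with hys
    have hy_diff : ∀ i, (p : ℤ_[p]) • ys (i+1) - ys i ∈ F := by
      intro i
      have h1 : (p : ℤ_[p]) • ms (i+1) - ms i ∈ LinearMap.ker g := by
        rw [LinearMap.mem_ker, map_sub, map_smul, hgm (i+1), hgm i, hstep i, sub_self]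
      rw [← hfg] at h1
      obtain ⟨l, hl⟩ := h1
      refine ⟨(n : ℤ_[p]) • l, hdivL l, ?_⟩
      rw [map_smul, hl]
      show (n : ℤ_[p]) • ((p : ℤ_[p]) • ms (i+1) - ms i)
          = (p : ℤ_[p]) • ((n : ℤ_[p]) • ms (i+1)) - (n : ℤ_[p]) • ms i
      rw [smul_sub, smul_comm]
    set P : Submodule ℤ_[p] M := Submodule.span ℤ_[p] (Set.range ys) ⊔ F with hP
    have hyP : ∀ i, ys i ∈ P := fun i => Submodule.mem_sup_left (Submodule.subset_span ⟨i, rfl⟩)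
    have hFP : F ≤ P := le_sup_right
    have hPdiv : IsDivisibleSubmodule p P := by
      have key : P ≤ P.map ((p : ℤ_[p]) • (LinearMap.id : M →ₗ[ℤ_[p]] M)) := by
        rw [hP]
        apply sup_le
        · rw [Submodule.span_le]
          rintro _ ⟨i, rfl⟩
          obtain ⟨w, hwF, hw⟩ := hFdiv _ (hy_diff i)
          refine ⟨ys (i+1) - w, Submodule.sub_mem _ (hyP (i+1)) (hFP hwF), ?_⟩
          simp only [LinearMap.smul_apply, LinearMap.id_apply, smul_sub, hw]
          abel
        · exact le_trans (div_le_map F hFdiv) (Submodule.map_mono hFP)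
      intro x hx
      obtain ⟨y, hy, hxy⟩ := key hx
      exact ⟨y, hy, by simpa using hxy⟩
    have hPle : P ≤ Submodule.comap g D := by
      apply sup_le
      · rw [Submodule.span_le]
        rintro _ ⟨i, rfl⟩
        show g ((n : ℤ_[p]) • ms i) ∈ D
        rw [map_smul, hgm]
        exact D.smul_mem _ (dseq i).2
      · rintro _ ⟨l, _, rfl⟩
        show g (f l) ∈ D
        have hker : f l ∈ LinearMap.ker g := hfg ▸ LinearMap.mem_range_self f l
        rw [LinearMap.mem_ker] at hker
        rw [hker]
        exact D.zero_mem
    have hpow : ∀ j, (p : ℤ_[p]) ^ j • ((dseq j : ↥D) : N) = d := by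
      intro j
      induction j with
      | zero => simpa using hd0
      | succ j ih => rw [pow_succ, mul_smul, hstep j]; exact ih
    have hzP : ((↑u⁻¹ : ℤ_[p]) • ys k) ∈ P := P.smul_mem _ (hyP k)
    have hgz : g ((↑u⁻¹ : ℤ_[p]) • ys k) = d := by
      have huinv : (↑u⁻¹ : ℤ_[p]) * (n : ℤ_[p]) = (p : ℤ_[p]) ^ k := by
        rw [hcast, ← hu, mul_comm ((p : ℤ_[p]) ^ k), ← mul_assoc, Units.inv_mul, one_mul]
      rw [map_smul]
      show (↑u⁻¹ : ℤ_[p]) • g ((n : ℤ_[p]) • ms k) = d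
      rw [map_smul, hgm, ← mul_smul, huinv, hpow k]
    refine ⟨⟨(↑u⁻¹ : ℤ_[p]) • ys k, hPle hzP⟩, ?_, hgz⟩
    exact le_divPart (isDiv_comap_subtype _ hPle hPdiv) hzP
  refine ⟨main, ?_⟩
  intro y hy
  obtain ⟨x, hx, hgx⟩ := main (divPart p N) isDiv_divPart y hy
  refine ⟨(x : M), ?_, hgx⟩
  exact le_divPart (isDiv_map (Submodule.comap g (divPart p N)).subtype isDiv_divPart)
    ⟨x, hx, rfl⟩
end

section
/- Let L be a Z_p-module such that L_Div is cofinitely generated and Cotor(L) = L/L_Div has finite exponent. Then Ext¹_{Z_p}(Q_p, L) = 0. -/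
section Aux

variable {p : ℕ} [hp : Fact p.Prime]

/-- The divisible part is itself a divisible submodule. -/
lemma divPart_divisible {L : Type*} [AddCommGroup L] [Module ℤ_[p] L]
    {x : L} (hx : x ∈ divPart p L) : ∃ y ∈ divPart p L, (p : ℤ_[p]) • y = x := by
  have h : divPart p L ≤
      Submodule.map ((p : ℤ_[p]) • (LinearMap.id : L →ₗ[ℤ_[p]] L)) (divPart p L) := by
    rw [divPart, sSup_le_iff]
    intro D hD z hz
    obtain ⟨y, hy, hyz⟩ := hD z hz
    exact ⟨y, (le_sSup hD : D ≤ sSup _) hy, by simpa using hyz⟩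
  obtain ⟨y, hy, hxy⟩ := h hx
  exact ⟨y, hy, by simpa using hxy⟩

lemma exists_pow_norm_le (q : ℚ_[p]) : ∃ n : ℕ, ‖q * (p : ℚ_[p]) ^ n‖ ≤ 1 := by
  have hp1 : (1 : ℝ) < p := by exact_mod_cast hp.out.one_lt
  obtain ⟨n, hn⟩ := pow_unbounded_of_one_lt ‖q‖ hp1
  refine ⟨n, ?_⟩
  rw [norm_mul, norm_pow, Padic.norm_p]
  calc ‖q‖ * ((p : ℝ)⁻¹) ^ n ≤ (p : ℝ) ^ n * ((p : ℝ)⁻¹) ^ n := by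
        apply mul_le_mul_of_nonneg_right hn.le (by positivity)
    _ = 1 := by
        rw [← mul_pow, mul_inv_cancel₀ (by positivity), one_pow]

lemma norm_mul_pow_mono {q : ℚ_[p]} {n : ℕ} (h : ‖q * (p : ℚ_[p]) ^ n‖ ≤ 1) (d : ℕ) :
    ‖q * (p : ℚ_[p]) ^ (n + d)‖ ≤ 1 := by
  have : q * (p : ℚ_[p]) ^ (n + d) = (q * (p : ℚ_[p]) ^ n) * (p : ℚ_[p]) ^ d := by ring
  rw [this, norm_mul, norm_pow, Padic.norm_p]
  have h1 : ((p : ℝ)⁻¹) ^ d ≤ 1 := by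
    apply pow_le_one₀ (by positivity)
    rw [inv_le_one_iff₀]
    right
    exact_mod_cast hp.out.one_le
  calc ‖q * (p : ℚ_[p]) ^ n‖ * ((p : ℝ)⁻¹) ^ d ≤ 1 * 1 :=
        mul_le_mul h h1 (by positivity) zero_le_one
    _ = 1 := one_mul 1

end Aux


def mkZp {p : ℕ} [Fact p.Prime] (x : ℚ_[p]) (h : ‖x‖ ≤ 1) : ℤ_[p] := ⟨x, h⟩

@[simp] lemma mkZp_coe {p : ℕ} [Fact p.Prime] (x : ℚ_[p]) (h : ‖x‖ ≤ 1) :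
    ((mkZp x h : ℤ_[p]) : ℚ_[p]) = x := rfl

/-- `Ext¹_{ℤ_p}(ℚ_p, L) = 0` for `L` with `L_Div` cofinitely generated and `Cotor(L)` of
finite exponent; equivalently, every extension `0 → L → E → ℚ_p → 0` of `ℤ_p`-modules
splits. -/
theorem stmt7 {p : ℕ} [Fact p.Prime]
    {L : Type*} [AddCommGroup L] [Module ℤ_[p] L]
    (hLdiv : CofinGen p (divPart p L))
    (hLcot : ∃ n : ℕ, 0 < n ∧ ∀ x : Cotor p L, n • x = 0) :
    ∀ (E : Type) [AddCommGroup E] [Module ℤ_[p] E]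
      (ι : L →ₗ[ℤ_[p]] E) (π : E →ₗ[ℤ_[p]] ℚ_[p]),
      Function.Injective ι → Function.Surjective π → LinearMap.range ι = LinearMap.ker π →
      ∃ s : ℚ_[p] →ₗ[ℤ_[p]] E, π.comp s = LinearMap.id := by
  classical
  intro E _ _ ι π hinj hsurj hker
  have hp : Fact p.Prime := inferInstance
  obtain ⟨n₀, hn₀, hcot⟩ := hLcot
  -- Step 1: a power of p kills Cotor
  set k := n₀.factorization p with hk_def
  have hppow : ∀ x : L, (p : ℤ_[p]) ^ k • x ∈ divPart p L := by
    intro x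
    set m := n₀ / p ^ k with hm_def
    have hmn : p ^ k * m = n₀ := Nat.ordProj_mul_ordCompl_eq_self n₀ p
    have hmd : ¬ (p : ℤ) ∣ (m : ℤ) := by
      rw [Int.natCast_dvd_natCast]
      exact Nat.not_dvd_ordCompl hp.out hn₀.ne'
    have hmu : IsUnit ((m : ℕ) : ℤ_[p]) := by
      rw [PadicInt.isUnit_iff]
      refine le_antisymm (PadicInt.norm_le_one _) ?_
      by_contra hlt
      push_neg at hlt
      have := (PadicInt.norm_int_lt_one_iff_dvd (m : ℤ)).mp (by
        rwa [Int.cast_natCast])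
      exact hmd this
    have h0 : (n₀ : ℤ_[p]) • (Submodule.Quotient.mk x : Cotor p L) = 0 := by
      rw [Nat.cast_smul_eq_nsmul]
      exact hcot _
    have h1 : ((m : ℕ) : ℤ_[p]) • ((p : ℤ_[p]) ^ k • (Submodule.Quotient.mk x : Cotor p L)) = 0 := by
      rw [smul_smul, ← Nat.cast_pow, ← Nat.cast_mul, Nat.mul_comm, hmn]
      exact h0
    obtain ⟨u, hu⟩ := hmu
    have h2 : (p : ℤ_[p]) ^ k • (Submodule.Quotient.mk x : Cotor p L) = 0 := by
      have h3 : ((u⁻¹ : ℤ_[p]ˣ) : ℤ_[p]) * ((m : ℕ) : ℤ_[p]) = 1 := by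
        rw [← hu]; exact u.inv_mul
      calc (p : ℤ_[p]) ^ k • (Submodule.Quotient.mk x : Cotor p L)
          = (((u⁻¹ : ℤ_[p]ˣ) : ℤ_[p]) * ((m : ℕ) : ℤ_[p]))
              • ((p : ℤ_[p]) ^ k • (Submodule.Quotient.mk x : Cotor p L)) := by
            rw [h3, one_smul]
        _ = ((u⁻¹ : ℤ_[p]ˣ) : ℤ_[p]) • (((m : ℕ) : ℤ_[p])
              • ((p : ℤ_[p]) ^ k • (Submodule.Quotient.mk x : Cotor p L))) := mul_smul _ _ _
        _ = ((u⁻¹ : ℤ_[p]ˣ) : ℤ_[p]) • (0 : Cotor p L) := by rw [h1]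
        _ = 0 := smul_zero _
    rwa [← Submodule.Quotient.mk_smul, Submodule.Quotient.mk_eq_zero] at h2
  -- Step 2: choose preimages of p⁻ⁿ
  choose t ht using fun n : ℕ => hsurj (((p : ℚ_[p])⁻¹) ^ n)
  have hmem : ∀ n : ℕ, (p : ℤ_[p]) • t (n + 1) - t n ∈ LinearMap.range ι := by
    intro n
    rw [hker, LinearMap.mem_ker, map_sub, map_smul, ht, ht]
    have hpne : (p : ℚ_[p]) ≠ 0 := by
      exact_mod_cast hp.out.ne_zero
    have : (p : ℤ_[p]) • ((p : ℚ_[p])⁻¹) ^ (n + 1) = ((p : ℚ_[p])⁻¹) ^ n := by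
      rw [Algebra.smul_def, PadicInt.algebraMap_apply, PadicInt.coe_natCast]
      rw [pow_succ]
      field_simp
    rw [this, sub_self]
  choose α hα using hmem
  -- Step 3: correction sequence
  let x' : ℕ → L := fun n => ∑ j ∈ Finset.range k, (p : ℤ_[p]) ^ j • α (n + j)
  have hx' : ∀ n, x' n = α n + (p : ℤ_[p]) • x' (n + 1) - (p : ℤ_[p]) ^ k • α (n + k) := by
    intro n
    have hs : (p : ℤ_[p]) • x' (n + 1)
        = ∑ j ∈ Finset.range k, (p : ℤ_[p]) ^ (j + 1) • α (n + (j + 1)) := by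
      show (p : ℤ_[p]) • (∑ j ∈ Finset.range k, (p : ℤ_[p]) ^ j • α (n + 1 + j)) = _
      rw [Finset.smul_sum]
      apply Finset.sum_congr rfl
      intro j _
      rw [smul_smul, ← pow_succ']
      congr 2
      omega
    have hid : (∑ j ∈ Finset.range k, (p : ℤ_[p]) ^ (j + 1) • α (n + (j + 1)))
          + (p : ℤ_[p]) ^ 0 • α (n + 0)
        = (∑ j ∈ Finset.range k, (p : ℤ_[p]) ^ j • α (n + j)) + (p : ℤ_[p]) ^ k • α (n + k) := by
      rw [← Finset.sum_range_succ' (fun i => (p : ℤ_[p]) ^ i • α (n + i)) k,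
        Finset.sum_range_succ (fun i => (p : ℤ_[p]) ^ i • α (n + i)) k]
    simp only [pow_zero, one_smul, Nat.add_zero] at hid
    show (∑ j ∈ Finset.range k, (p : ℤ_[p]) ^ j • α (n + j))
        = α n + (p : ℤ_[p]) • x' (n + 1) - (p : ℤ_[p]) ^ k • α (n + k)
    rw [hs, add_comm (α n), hid]
    abel
  -- divisible correction
  have div : ∀ z : divPart p L, ∃ w : divPart p L, (p : ℤ_[p]) • w = z := by
    intro z
    obtain ⟨w, hw, h⟩ := divPart_divisible z.2
    exact ⟨⟨w, hw⟩, Subtype.ext h⟩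
  choose g hg using div
  let γ : ℕ → divPart p L := fun n => ⟨(p : ℤ_[p]) ^ k • α (n + k), hppow _⟩
  let y : ℕ → divPart p L := fun n => Nat.rec (0 : divPart p L) (fun n yn => g (yn - γ n)) n
  have hy : ∀ n, (p : ℤ_[p]) • y (n + 1) = y n - γ n := fun n => hg _
  let x : ℕ → L := fun n => x' n + (y n).1
  have hx : ∀ n, x n = α n + (p : ℤ_[p]) • x (n + 1) := by
    intro n
    have h1 : (((p : ℤ_[p]) • y (n + 1)).1 : L)
        = ((y n).1 : L) - ((p : ℤ_[p]) ^ k • α (n + k)) := by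
      rw [hy n]; rfl
    have h2 : (((p : ℤ_[p]) • (y (n + 1))).1 : L) = (p : ℤ_[p]) • ((y (n + 1)).1 : L) := rfl
    rw [h2] at h1
    show x' n + ((y n).1 : L) = α n + (p : ℤ_[p]) • (x' (n + 1) + ((y (n + 1)).1 : L))
    rw [smul_add, h1, hx' n]
    abel
  -- Step 4: the compatible sequence e
  let e : ℕ → E := fun n => t n + ι (x n)
  have hπe : ∀ n, π (e n) = ((p : ℚ_[p])⁻¹) ^ n := by
    intro n
    show π (t n + ι (x n)) = _
    have : π (ι (x n)) = 0 := by
      have : ι (x n) ∈ LinearMap.ker π := by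
        rw [← hker]; exact ⟨x n, rfl⟩
      exact this
    rw [map_add, this, add_zero, ht]
  have hstep : ∀ n, (p : ℤ_[p]) • e (n + 1) = e n := by
    intro n
    show (p : ℤ_[p]) • (t (n + 1) + ι (x (n + 1))) = t n + ι (x n)
    rw [smul_add, ← map_smul]
    have h1 : (p : ℤ_[p]) • t (n + 1) = t n + ι (α n) := by
      rw [hα n]; abel
    rw [h1, hx n, map_add]
    abel
  have hpow : ∀ n d, (p : ℤ_[p]) ^ d • e (n + d) = e n := by
    intro n d
    induction d with
    | zero => simp
    | succ d ih =>
      rw [pow_succ, mul_smul, show n + (d + 1) = (n + d) + 1 from rfl, hstep, ih]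
  -- Step 5: define the section
  let F : ℚ_[p] → ℕ → E := fun q m =>
    if h : ‖q * (p : ℚ_[p]) ^ m‖ ≤ 1 then mkZp (q * (p : ℚ_[p]) ^ m) h • e m else 0
  have Fval : ∀ (q : ℚ_[p]) (m : ℕ) (h : ‖q * (p : ℚ_[p]) ^ m‖ ≤ 1),
      F q m = mkZp (q * (p : ℚ_[p]) ^ m) h • e m := by
    intro q m h
    simp only [F, dif_pos h]
  have mono : ∀ (q : ℚ_[p]) (n : ℕ), ‖q * (p : ℚ_[p]) ^ n‖ ≤ 1 →
      ∀ d : ℕ, F q n = F q (n + d) := by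
    intro q n h d
    rw [Fval q n h, Fval q (n + d) (norm_mul_pow_mono h d)]
    have hz : mkZp (q * (p : ℚ_[p]) ^ (n + d)) (norm_mul_pow_mono h d)
        = mkZp (q * (p : ℚ_[p]) ^ n) h * (p : ℤ_[p]) ^ d := by
      apply Subtype.ext
      show q * (p : ℚ_[p]) ^ (n + d) = _
      push_cast
      simp only [mkZp_coe]
      ring
    rw [hz, mul_smul, hpow n d]
  let N : ℚ_[p] → ℕ := fun q => Classical.choose (exists_pow_norm_le q)
  have hN : ∀ q : ℚ_[p], ‖q * (p : ℚ_[p]) ^ (N q)‖ ≤ 1 := fun q =>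
    Classical.choose_spec (exists_pow_norm_le q)
  let s0 : ℚ_[p] → E := fun q => F q (N q)
  have key : ∀ (q : ℚ_[p]) (n : ℕ), ‖q * (p : ℚ_[p]) ^ n‖ ≤ 1 → s0 q = F q n := by
    intro q n h
    rcases le_total (N q) n with hle | hle
    · have := mono q (N q) (hN q) (n - N q)
      rwa [Nat.add_sub_cancel' hle] at this
    · have := mono q n h (N q - n)
      rw [Nat.add_sub_cancel' hle] at this
      exact this.symm
  -- build the linear map
  refine ⟨{ toFun := s0
            map_add' := ?_
            map_smul' := ?_ }, ?_⟩
  · intro q r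
    set n := max (N q) (N r) with hn
    have hq : ‖q * (p : ℚ_[p]) ^ n‖ ≤ 1 := by
      have := norm_mul_pow_mono (hN q) (n - N q)
      rwa [show N q + (n - N q) = n by omega] at this
    have hr : ‖r * (p : ℚ_[p]) ^ n‖ ≤ 1 := by
      have := norm_mul_pow_mono (hN r) (n - N r)
      rwa [show N r + (n - N r) = n by omega] at this
    have hqr : ‖(q + r) * (p : ℚ_[p]) ^ n‖ ≤ 1 := by
      have h1 : (q + r) * (p : ℚ_[p]) ^ n = q * (p : ℚ_[p]) ^ n + r * (p : ℚ_[p]) ^ n := by ring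
      rw [h1]
      have := (mkZp (q * (p : ℚ_[p]) ^ n) hq + mkZp (r * (p : ℚ_[p]) ^ n) hr).2
      exact this
    show s0 (q + r) = s0 q + s0 r
    rw [key (q + r) n hqr, key q n hq, key r n hr,
      Fval _ n hqr, Fval _ n hq, Fval _ n hr]
    have h2 : mkZp ((q + r) * (p : ℚ_[p]) ^ n) hqr
        = mkZp (q * (p : ℚ_[p]) ^ n) hq + mkZp (r * (p : ℚ_[p]) ^ n) hr := by
      apply Subtype.ext
      show (q + r) * (p : ℚ_[p]) ^ n = _
      push_cast
      simp only [mkZp_coe]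
      ring
    rw [h2, add_smul]
  · intro c q
    simp only [RingHom.id_apply]
    have hsm : c • q = (c : ℚ_[p]) * q := by
      rw [Algebra.smul_def, PadicInt.algebraMap_apply]
    have hcq : ‖(c • q) * (p : ℚ_[p]) ^ (N q)‖ ≤ 1 := by
      rw [hsm, mul_assoc, norm_mul]
      calc ‖(c : ℚ_[p])‖ * ‖q * (p : ℚ_[p]) ^ (N q)‖ ≤ 1 * 1 :=
            mul_le_mul (PadicInt.norm_le_one c) (hN q) (norm_nonneg _) zero_le_one
        _ = 1 := one_mul 1
    show s0 (c • q) = c • s0 q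
    rw [key (c • q) (N q) hcq, Fval _ _ hcq, show s0 q = F q (N q) from rfl,
      Fval _ _ (hN q)]
    have h2 : mkZp ((c • q) * (p : ℚ_[p]) ^ (N q)) hcq
        = c * mkZp (q * (p : ℚ_[p]) ^ (N q)) (hN q) := by
      apply Subtype.ext
      show (c • q) * (p : ℚ_[p]) ^ (N q) = _
      push_cast
      simp only [mkZp_coe]
      rw [hsm]
      ring
    rw [h2, mul_smul]
  · ext q
    show π (s0 q) = q
    rw [show s0 q = F q (N q) from rfl, Fval _ _ (hN q), map_smul, hπe]
    rw [Algebra.smul_def, PadicInt.algebraMap_apply]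
    show (q * (p : ℚ_[p]) ^ (N q)) * ((p : ℚ_[p])⁻¹) ^ (N q) = q
    have hpne : (p : ℚ_[p]) ≠ 0 := by exact_mod_cast hp.out.ne_zero
    field_simp
    rw [one_div, inv_pow, mul_assoc, mul_inv_cancel₀ (pow_ne_zero _ hpne), mul_one]
end

section
/- Let Λ be a directed set and {N_λ}_{λ∈Λ} an inductive system of cofinitely generated Z_p-modules such that for all λ' ≥ λ the cokernel of the transition map N_λ → N_{λ'} is divisible. Let L be a cofinitely generated Z_p-module and {f_λ : N_λ → L} a compatible family of Z_p-homomorphisms. Then there exists λ₀ ∈ Λ such that for all λ ≥ λ₀, the cokernel of the inclusion Ker(f_{λ₀}) → Ker(f_λ) is divisible. -/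
open PadicInt

set_option synthInstance.maxHeartbeats 1000000
set_option maxHeartbeats 1000000

namespace Stmt8Aux

variable {p : ℕ} [Fact p.Prime]

abbrev E (p : ℕ) [Fact p.Prime] := ℚ_[p] ⧸ LinearMap.range (Algebra.linearMap ℤ_[p] ℚ_[p])

noncomputable abbrev emk : ℚ_[p] →ₗ[ℤ_[p]] E p :=
  Submodule.mkQ _

lemma p_ne_zero : ((p : ℚ_[p])) ≠ 0 :=
  Nat.cast_ne_zero.mpr (Fact.out : p.Prime).ne_zero

lemma smul_emk (a : ℤ_[p]) (q : ℚ_[p]) : a • (emk (p := p) q) = emk ((a : ℚ_[p]) * q) := by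
  rw [← map_smul]; congr 1

lemma emk_eq_zero_iff (q : ℚ_[p]) : emk (p := p) q = 0 ↔ ‖q‖ ≤ 1 := by
  rw [Submodule.mkQ_apply, Submodule.Quotient.mk_eq_zero, LinearMap.mem_range]
  constructor
  · rintro ⟨a, rfl⟩; exact a.2
  · intro h; exact ⟨⟨q, h⟩, rfl⟩

lemma E_div (e : E p) : ∃ e' : E p, (p : ℤ_[p]) • e' = e := by
  obtain ⟨q, rfl⟩ := Submodule.mkQ_surjective _ e
  refine ⟨emk ((p : ℚ_[p])⁻¹ * q), ?_⟩
  rw [smul_emk]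
  congr 1
  rw [← mul_assoc]
  rw [show ((p : ℤ_[p]) : ℚ_[p]) = (p : ℚ_[p]) from rfl, mul_inv_cancel₀ p_ne_zero, one_mul]

lemma E_pow_div (n : ℕ) (e : E p) : ∃ e' : E p, (p : ℤ_[p]) ^ n • e' = e := by
  induction n with
  | zero => exact ⟨e, by simp⟩
  | succ n ih =>
    obtain ⟨e', he'⟩ := ih
    obtain ⟨e'', he''⟩ := E_div e'
    exact ⟨e'', by rw [pow_succ, mul_smul, he'', he']⟩

lemma baer_E : Module.Baer ℤ_[p] (E p) := by
  intro I g
  rcases eq_or_ne I ⊥ with rfl | hI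
  · refine ⟨0, ?_⟩
    rintro x hx
    rcases (Submodule.mem_bot _).mp hx with rfl
    have : (⟨(0:ℤ_[p]), hx⟩ : (⊥ : Ideal ℤ_[p])) = 0 := rfl
    rw [this, map_zero]
    simp
  obtain ⟨n, rfl⟩ := ideal_eq_span_pow_p hI
  have hmem : (p : ℤ_[p]) ^ n ∈ Ideal.span {(p : ℤ_[p]) ^ n} :=
    Ideal.mem_span_singleton_self _
  obtain ⟨e, he⟩ := E_pow_div n (g ⟨_, hmem⟩)
  refine ⟨LinearMap.toSpanSingleton ℤ_[p] _ e, ?_⟩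
  intro x hx
  obtain ⟨c, hc⟩ := Ideal.mem_span_singleton'.mp hx
  have : (⟨x, hx⟩ : Ideal.span {(p : ℤ_[p]) ^ n}) = c • ⟨_, hmem⟩ := by
    ext; simp [← hc]
  rw [this, map_smul, ← he, LinearMap.toSpanSingleton_apply, ← hc, mul_smul]

/-- Extension of maps into E from a submodule. -/
lemma extend_E {L : Type*} [AddCommGroup L] [Module ℤ_[p] L] (A : Submodule ℤ_[p] L)
    (ψ : A →ₗ[ℤ_[p]] E p) : ∃ φ : L →ₗ[ℤ_[p]] E p, ∀ a : A, φ a = ψ a := by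
  obtain ⟨φ, hφ⟩ := baer_E.extension_property A.subtype (Submodule.injective_subtype A) ψ
  exact ⟨φ, fun a => LinearMap.congr_fun hφ a⟩

lemma emk_inv_pow_ne_zero (n : ℕ) (hn : 1 ≤ n) : emk (p := p) (((p : ℚ_[p]))⁻¹ ^ n) ≠ 0 := by
  rw [Ne, emk_eq_zero_iff, not_le, _root_.norm_pow, norm_inv, Padic.norm_p, inv_inv]
  have h1 : (1 : ℝ) < (p : ℝ) := by
    exact_mod_cast (Fact.out : p.Prime).one_lt
  calc (1:ℝ) < (p:ℝ) := h1
  _ ≤ (p:ℝ) ^ n := le_self_pow₀ h1.le (by omega)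

lemma cyclic_map {L : Type*} [AddCommGroup L] [Module ℤ_[p] L]
    (g : ℤ_[p] →ₗ[ℤ_[p]] L) (e : E p)
    (hkerle : LinearMap.ker g ≤ LinearMap.ker (LinearMap.toSpanSingleton ℤ_[p] (E p) e)) :
    ∃ ψ : LinearMap.range g →ₗ[ℤ_[p]] E p, ∀ (a : ℤ_[p]),
      ψ ⟨g a, LinearMap.mem_range_self g a⟩ = a • e := by
  refine ⟨LinearMap.comp (Submodule.liftQ (LinearMap.ker g)
      (LinearMap.toSpanSingleton ℤ_[p] (E p) e) hkerle)
    (LinearMap.quotKerEquivRange g).symm.toLinearMap, ?_⟩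
  intro a
  have h1 : (⟨g a, LinearMap.mem_range_self g a⟩ : LinearMap.range g)
      = LinearMap.quotKerEquivRange g (Submodule.Quotient.mk a) := by
    ext; rw [LinearMap.quotKerEquivRange_apply_mk]
  rw [LinearMap.comp_apply, h1]
  rw [LinearEquiv.coe_toLinearMap, LinearEquiv.symm_apply_apply]
  exact Submodule.liftQ_apply (LinearMap.ker g) (LinearMap.toSpanSingleton ℤ_[p] (E p) e) a

/-- `E` is a cogenerator for `ℤ_[p]`-modules. -/
lemma cogen {L : Type*} [AddCommGroup L] [Module ℤ_[p] L] (x : L) (hx : x ≠ 0) :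
    ∃ φ : L →ₗ[ℤ_[p]] E p, φ x ≠ 0 := by
  classical
  set g := LinearMap.toSpanSingleton ℤ_[p] L x with hg
  have main : ∃ (e₁ : E p), e₁ ≠ 0 ∧
      LinearMap.ker g ≤ LinearMap.ker (LinearMap.toSpanSingleton ℤ_[p] (E p) e₁) := by
    rcases eq_or_ne (LinearMap.ker g) ⊥ with hker | hker
    · exact ⟨emk (((p : ℚ_[p]))⁻¹ ^ 1), emk_inv_pow_ne_zero 1 le_rfl, by rw [hker]; exact bot_le⟩
    · obtain ⟨n, hn⟩ := ideal_eq_span_pow_p hker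
      have hn1 : 1 ≤ n := by
        rcases Nat.eq_zero_or_pos n with rfl | h
        · exfalso
          apply hx
          have : (1 : ℤ_[p]) ∈ LinearMap.ker g := by
            rw [hn]; simpa using Ideal.mem_span_singleton_self _
          simpa [hg] using this
        · exact h
      refine ⟨emk (((p : ℚ_[p]))⁻¹ ^ n), emk_inv_pow_ne_zero n hn1, ?_⟩
      intro a ha
      rw [hn] at ha
      obtain ⟨c, hc⟩ := Ideal.mem_span_singleton'.mp ha
      have hpe : (p : ℤ_[p]) ^ n • (emk (((p : ℚ_[p]))⁻¹ ^ n) : E p) = 0 := by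
        rw [smul_emk, emk_eq_zero_iff]
        rw [show (((p : ℤ_[p]) ^ n : ℤ_[p]) : ℚ_[p]) = (p : ℚ_[p]) ^ n from by push_cast; rfl]
        rw [← mul_pow, mul_inv_cancel₀ p_ne_zero, one_pow, norm_one]
      simp only [LinearMap.mem_ker, LinearMap.toSpanSingleton_apply, ← hc, mul_smul, hpe,
        smul_zero]
  obtain ⟨e₁, he₁, hkerle⟩ := main
  obtain ⟨ψ, hψ⟩ := cyclic_map g e₁ hkerle
  obtain ⟨φ, hφ⟩ := extend_E _ ψ
  have hxmem : x ∈ LinearMap.range g := ⟨1, by simp [hg]⟩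
  refine ⟨φ, ?_⟩
  have hx1 : (⟨x, hxmem⟩ : LinearMap.range g) = ⟨g 1, LinearMap.mem_range_self g 1⟩ := by
    ext; simp [hg]
  have := hφ ⟨x, hxmem⟩
  rw [this, hx1, hψ 1, one_smul]
  exact he₁

lemma torsionE (e : E p) : ∃ n : ℕ, (p : ℤ_[p]) ^ n • e = 0 := by
  obtain ⟨q, rfl⟩ := Submodule.mkQ_surjective _ e
  obtain ⟨n, hn⟩ : ∃ n : ℕ, ‖q‖ ≤ (p : ℝ) ^ n := by
    obtain ⟨n, hn⟩ := pow_unbounded_of_one_lt ‖q‖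
      (by exact_mod_cast (Fact.out : p.Prime).one_lt : (1:ℝ) < (p:ℝ))
    exact ⟨n, hn.le⟩
  refine ⟨n, ?_⟩
  have h2 : ((p : ℤ_[p]) ^ n • (emk q : E p) : E p) = emk (((p:ℚ_[p]))^n * q) := by
    rw [smul_emk]
    congr 2
  rw [show ((Submodule.mkQ (LinearMap.range (Algebra.linearMap ℤ_[p] ℚ_[p]))) q : E p) = emk q
    from rfl, h2, emk_eq_zero_iff]
  rw [_root_.norm_mul, _root_.norm_pow, Padic.norm_p]
  have hp0 : (0:ℝ) < (p:ℝ) := by exact_mod_cast (Fact.out : p.Prime).pos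
  rw [inv_pow]
  rw [inv_mul_le_iff₀ (by positivity), mul_one]
  exact hn

/-- Cofinitely generated modules are `p`-power torsion. -/
lemma torsionL {L : Type*} [AddCommGroup L] [Module ℤ_[p] L]
    (hL : Module.Finite ℤ_[p] (L →ₗ[ℤ_[p]] E p)) (x : L) :
    ∃ n : ℕ, (p : ℤ_[p]) ^ n • x = 0 := by
  classical
  set g := LinearMap.toSpanSingleton ℤ_[p] L x with hg
  rcases eq_or_ne (LinearMap.ker g) ⊥ with hker | hker
  · -- x generates a free module: contradiction
    exfalso
    have hinj : Function.Injective g := by rwa [← LinearMap.ker_eq_bot]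
    -- evaluation map is surjective onto E
    have hsurj : ∀ e : E p, ∃ φ : L →ₗ[ℤ_[p]] E p, φ x = e := by
      intro e
      obtain ⟨ψ, hψ⟩ := cyclic_map g e (by rw [hker]; exact bot_le)
      obtain ⟨φ, hφ⟩ := extend_E _ ψ
      refine ⟨φ, ?_⟩
      have hxmem : x ∈ LinearMap.range g := ⟨1, by simp [hg]⟩
      have hx1 : (⟨x, hxmem⟩ : LinearMap.range g) = ⟨g 1, LinearMap.mem_range_self g 1⟩ := by
        ext; simp [hg]
      rw [hφ ⟨x, hxmem⟩, hx1, hψ 1, one_smul]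
    -- hence E is finitely generated
    have hEfg : Module.Finite ℤ_[p] (E p) := by
      have : Function.Surjective (LinearMap.applyₗ (R := ℤ_[p]) x :
          (L →ₗ[ℤ_[p]] E p) →ₗ[ℤ_[p]] E p) := by
        intro e; obtain ⟨φ, hφ⟩ := hsurj e; exact ⟨φ, hφ⟩
      exact Module.Finite.of_surjective _ this
    -- E f.g. and torsion gives bounded exponent
    obtain ⟨s, hs⟩ := hEfg.fg_top
    choose ν hν using (torsionE (p := p))
    set Nb := s.sup ν with hNb
    have hkill : ∀ e : E p, (p : ℤ_[p]) ^ Nb • e = 0 := by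
      intro e
      have he : e ∈ Submodule.span ℤ_[p] (s : Set (E p)) := by rw [hs]; trivial
      induction he using Submodule.span_induction with
      | mem y hy =>
        have hle : ν y ≤ Nb := Finset.le_sup hy
        rw [show Nb = (Nb - ν y) + ν y from (Nat.sub_add_cancel hle).symm, pow_add, mul_smul,
          hν y, smul_zero]
      | zero => simp
      | add y z _ _ hy hz => rw [smul_add, hy, hz, add_zero]
      | smul c y _ hy => rw [smul_comm, hy, smul_zero]
    -- but E has elements of arbitrary order
    have : (p : ℤ_[p]) ^ Nb • (emk (((p:ℚ_[p]))⁻¹ ^ (Nb+1)) : E p) ≠ 0 := by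
      rw [smul_emk]
      rw [show (((p : ℤ_[p]) ^ Nb : ℤ_[p]) : ℚ_[p]) = (p : ℚ_[p]) ^ Nb from by push_cast; rfl]
      rw [Ne, emk_eq_zero_iff, not_le]
      rw [_root_.norm_mul, _root_.norm_pow, _root_.norm_pow, norm_inv, Padic.norm_p, inv_inv]
      have hp1 : (1:ℝ) < (p:ℝ) := by exact_mod_cast (Fact.out : p.Prime).one_lt
      have hp0 : (0:ℝ) < (p:ℝ) := lt_trans one_pos hp1
      rw [show ((p:ℝ))⁻¹ ^ Nb * (p:ℝ) ^ (Nb+1) = (p:ℝ) by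
        rw [pow_succ, ← mul_assoc, inv_pow, inv_mul_cancel₀ (by positivity), one_mul]]
      exact hp1
    exact this (hkill _)
  · obtain ⟨n, hn⟩ := ideal_eq_span_pow_p hker
    refine ⟨n, ?_⟩
    have : (p : ℤ_[p]) ^ n ∈ LinearMap.ker g := by
      rw [hn]; exact Ideal.mem_span_singleton_self _
    simpa [hg] using this

/-- A finitely generated `ℤ_[p]`-module killed by `p` is finite. -/
lemma finite_of_fg_pkill {M : Type*} [AddCommGroup M] [Module ℤ_[p] M]
    (hfg : Module.Finite ℤ_[p] M) (hp : ∀ m : M, (p : ℤ_[p]) • m = 0) : Finite M := by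
  classical
  haveI : NeZero p := ⟨(Fact.out : p.Prime).ne_zero⟩
  obtain ⟨s, hs⟩ := hfg.fg_top
  set F : (s → ZMod p) → M := fun c => ∑ i : s, (((c i).val : ℕ) : ℤ_[p]) • (i : M) with hF
  have hsurj : Function.Surjective F := by
    intro m
    have hm : m ∈ Submodule.span ℤ_[p] (s : Set M) := by rw [hs]; trivial
    obtain ⟨μ, -, hμ⟩ := Submodule.mem_span_finset.mp hm
    refine ⟨fun i => PadicInt.toZMod (μ i), ?_⟩
    rw [hF]
    dsimp only
    rw [← hμ, ← Finset.sum_attach s (fun i => μ i • i)]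
    apply Finset.sum_congr rfl
    intro i _
    have hker : (((PadicInt.toZMod (μ i)).val : ℕ) : ℤ_[p]) - μ i ∈
        RingHom.ker (PadicInt.toZMod (p := p)) := by
      rw [RingHom.mem_ker, map_sub, map_natCast]
      exact sub_eq_zero.mpr (ZMod.natCast_rightInverse _)
    rw [PadicInt.ker_toZMod, PadicInt.maximalIdeal_eq_span_p] at hker
    obtain ⟨r, hr⟩ := Ideal.mem_span_singleton'.mp hker
    have : ((((PadicInt.toZMod (μ i)).val : ℕ) : ℤ_[p]) - μ i) • (i : M) = 0 := by
      rw [← hr, mul_smul, hp, smul_zero]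
    have := sub_smul ((((PadicInt.toZMod (μ i)).val : ℕ) : ℤ_[p])) (μ i) (i : M) ▸ this
    have h2 := sub_eq_zero.mp this
    exact h2
  exact Finite.of_surjective F hsurj

/-- The p-torsion of E is finite. -/
lemma finite_Ep : Finite {e : E p // (p : ℤ_[p]) • e = 0} := by
  classical
  haveI : NeZero p := ⟨(Fact.out : p.Prime).ne_zero⟩
  set gen : E p := emk ((p : ℚ_[p])⁻¹) with hgen
  have hgen0 : (p : ℤ_[p]) • gen = 0 := by
    rw [hgen, smul_emk, emk_eq_zero_iff,
      show (((p : ℤ_[p]) : ℚ_[p])) = (p:ℚ_[p]) from rfl, mul_inv_cancel₀ p_ne_zero, norm_one]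
  set F : ZMod p → {e : E p // (p : ℤ_[p]) • e = 0} :=
    fun c => ⟨((c.val : ℕ) : ℤ_[p]) • gen, by rw [smul_comm, hgen0, smul_zero]⟩ with hF
  have hsurj : Function.Surjective F := by
    rintro ⟨e, he⟩
    obtain ⟨q, hq0⟩ := Submodule.mkQ_surjective _ e
    have he' : (p : ℤ_[p]) • (emk q : E p) = 0 := by rw [show (emk q : E p) = e from hq0]; exact he
    rw [smul_emk, emk_eq_zero_iff] at he'
    set a : ℤ_[p] := ⟨((p : ℤ_[p]) : ℚ_[p]) * q, he'⟩ with ha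
    have hq : (emk q : E p) = a • gen := by
      rw [hgen, smul_emk]
      congr 1
      rw [show ((a : ℚ_[p])) = (p : ℚ_[p]) * q from rfl]
      rw [mul_comm ((p:ℚ_[p])) q, mul_assoc, mul_inv_cancel₀ p_ne_zero, mul_one]
    have hker : (((PadicInt.toZMod a).val : ℕ) : ℤ_[p]) - a ∈
        RingHom.ker (PadicInt.toZMod (p := p)) := by
      rw [RingHom.mem_ker, map_sub, map_natCast]
      exact sub_eq_zero.mpr (ZMod.natCast_rightInverse _)
    rw [PadicInt.ker_toZMod, PadicInt.maximalIdeal_eq_span_p] at hker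
    obtain ⟨r, hr⟩ := Ideal.mem_span_singleton'.mp hker
    have hz : ((((PadicInt.toZMod a).val : ℕ) : ℤ_[p]) - a) • gen = 0 := by
      rw [← hr, mul_smul, hgen0, smul_zero]
    rw [sub_smul] at hz
    refine ⟨PadicInt.toZMod a, ?_⟩
    apply Subtype.ext
    rw [hF]
    dsimp only
    rw [sub_eq_zero.mp hz, ← hq, hq0]
  exact Finite.of_surjective F hsurj

/-- The p-torsion of a cofinitely generated module is finite. -/
lemma finite_Lp {L : Type*} [AddCommGroup L] [Module ℤ_[p] L]
    (hL : Module.Finite ℤ_[p] (L →ₗ[ℤ_[p]] E p)) :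
    Finite {x : L // (p : ℤ_[p]) • x = 0} := by
  classical
  set H := L →ₗ[ℤ_[p]] E p with hH
  set sm : H →ₗ[ℤ_[p]] H := (p : ℤ_[p]) • LinearMap.id with hsm
  set pH : Submodule ℤ_[p] H := LinearMap.range sm with hpH
  haveI : Module.Finite ℤ_[p] H := hL
  haveI hQfin : Module.Finite ℤ_[p] (H ⧸ pH) :=
    Module.Finite.of_surjective pH.mkQ (Submodule.mkQ_surjective pH)
  have hQkill : ∀ h : H ⧸ pH, (p : ℤ_[p]) • h = 0 := by
    intro h
    obtain ⟨φ, rfl⟩ := Submodule.mkQ_surjective pH h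
    rw [← map_smul, Submodule.mkQ_apply, Submodule.Quotient.mk_eq_zero]
    exact ⟨φ, rfl⟩
  haveI hQfinite : Finite (H ⧸ pH) := finite_of_fg_pkill hQfin hQkill
  haveI hEpfin : Finite {e : E p // (p : ℤ_[p]) • e = 0} := finite_Ep
  -- the injection
  set j : {x : L // (p : ℤ_[p]) • x = 0} → ((H ⧸ pH) → {e : E p // (p : ℤ_[p]) • e = 0}) :=
    fun x h => ⟨Submodule.liftQ pH (LinearMap.applyₗ (x : L)) (by
        rintro φ ⟨ψ, rfl⟩
        rw [LinearMap.mem_ker, LinearMap.applyₗ_apply_apply]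
        rw [hsm]
        rw [LinearMap.smul_apply, LinearMap.id_apply, LinearMap.smul_apply, ← map_smul, x.2,
          map_zero]) h,
      by
        obtain ⟨φ, rfl⟩ := Submodule.mkQ_surjective pH h
        rw [Submodule.mkQ_apply, Submodule.liftQ_apply, LinearMap.applyₗ_apply_apply,
          ← map_smul, x.2, map_zero]⟩ with hj
  have hjinj : Function.Injective j := by
    intro x y hxy
    apply Subtype.ext
    by_contra hne
    obtain ⟨φ, hφ⟩ := cogen (p := p) ((x : L) - (y : L)) (sub_ne_zero.mpr hne)
    have := congrFun hxy (Submodule.Quotient.mk φ)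
    rw [hj] at this
    have h2 := congrArg Subtype.val this
    dsimp only at h2
    rw [Submodule.liftQ_apply, Submodule.liftQ_apply] at h2
    rw [LinearMap.applyₗ_apply_apply, LinearMap.applyₗ_apply_apply] at h2
    apply hφ
    rw [map_sub, h2, sub_self]
  exact Finite.of_injective j hjinj

end Stmt8Aux

open Stmt8Aux in
theorem stmt8' {p : ℕ} [Fact p.Prime]
    {Λ : Type*} [Preorder Λ] [IsDirected Λ (· ≤ ·)] [Nonempty Λ]
    (N : Λ → Type*) [∀ l, AddCommGroup (N l)] [∀ l, Module ℤ_[p] (N l)]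
    (t : ∀ ⦃i j : Λ⦄, i ≤ j → N i →ₗ[ℤ_[p]] N j)
    (ht_id : ∀ (i : Λ) (x : N i), t (le_refl i) x = x)
    (ht_comp : ∀ (i j k : Λ) (hij : i ≤ j) (hjk : j ≤ k) (x : N i),
      t hjk (t hij x) = t (hij.trans hjk) x)
    (hdivcoker : ∀ (i j : Λ) (hij : i ≤ j), ∀ x : N j, ∃ y : N j, ∃ z : N i,
      t hij z = x - (p : ℤ_[p]) • y)
    {L : Type*} [AddCommGroup L] [Module ℤ_[p] L]
    (hL : Module.Finite ℤ_[p] (L →ₗ[ℤ_[p]] E p))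
    (f : ∀ i, N i →ₗ[ℤ_[p]] L)
    (hf : ∀ (i j : Λ) (hij : i ≤ j), (f j).comp (t hij) = f i) :
    ∃ l₀ : Λ, ∀ (l : Λ) (hl : l₀ ≤ l), ∀ x : N l, f l x = 0 →
      ∃ y : N l, f l y = 0 ∧ ∃ z : N l₀, f l₀ z = 0 ∧ t hl z = x - (p : ℤ_[p]) • y := by
  classical
  have tor : ∀ x : L, ∃ n : ℕ, (p : ℤ_[p]) ^ n • x = 0 := torsionL hL
  have finLp : Finite {x : L // (p : ℤ_[p]) • x = 0} := finite_Lp hL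
  set LpS : Set L := {x | (p : ℤ_[p]) • x = 0} with hLpS
  have hLpFin : LpS.Finite := Set.finite_coe_iff.mp finLp
  -- the submodules p^k · Im(f l)
  set Ik : Λ → ℕ → Submodule ℤ_[p] L :=
    fun l k => LinearMap.range (((p : ℤ_[p]) ^ k) • (f l)) with hIk
  have Ik_intro : ∀ (l : Λ) (k : ℕ) (n : N l), (p : ℤ_[p]) ^ k • (f l n) ∈ Ik l k := by
    intro l k n
    exact ⟨n, by rw [LinearMap.smul_apply]⟩
  have Ik_elim : ∀ (l : Λ) (k : ℕ) (x : L), x ∈ Ik l k →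
      ∃ n : N l, (p : ℤ_[p]) ^ k • (f l n) = x := by
    rintro l k x ⟨n, hn⟩
    exact ⟨n, by rw [← hn, LinearMap.smul_apply]⟩
  have Ik_mono_k : ∀ (l : Λ) (k j : ℕ) (x : L), x ∈ Ik l (k + j) → x ∈ Ik l k := by
    intro l k j x hx
    obtain ⟨n, hn⟩ := Ik_elim l (k + j) x hx
    refine ⟨(p : ℤ_[p]) ^ j • n, ?_⟩
    rw [LinearMap.smul_apply, map_smul, smul_smul, ← pow_add, hn]
  have Ik_mono_le : ∀ (l : Λ) (k k' : ℕ), k ≤ k' → ∀ x : L, x ∈ Ik l k' → x ∈ Ik l k := by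
    intro l k k' hkk' x hx
    obtain ⟨j, rfl⟩ := Nat.exists_eq_add_of_le hkk'
    exact Ik_mono_k l k j x hx
  have Ik_mono_l : ∀ {l l' : Λ} (h : l ≤ l') (k : ℕ) (x : L), x ∈ Ik l k → x ∈ Ik l' k := by
    intro l l' h k x hx
    obtain ⟨n, hn⟩ := Ik_elim l k x hx
    refine ⟨t h n, ?_⟩
    rw [LinearMap.smul_apply]
    rw [show f l' (t h n) = f l n from LinearMap.congr_fun (hf l l' h) n, hn]
  -- the p-torsion parts
  set u : Λ → ℕ → Set L := fun l k => {x | (p : ℤ_[p]) • x = 0 ∧ x ∈ Ik l k} with hu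
  have u_fin : ∀ l k, (u l k).Finite := by
    intro l k
    exact hLpFin.subset (fun x hx => hx.1)
  have u_mono_le : ∀ (l : Λ) (k k' : ℕ), k ≤ k' → u l k' ⊆ u l k := by
    intro l k k' hkk' x hx
    exact ⟨hx.1, Ik_mono_le l k k' hkk' x hx.2⟩
  -- stabilization in k
  have S1 : ∀ l : Λ, ∃ k₀ : ℕ, ∀ k, k₀ ≤ k → u l k = u l k₀ := by
    intro l
    set c : ℕ → ℕ := fun k => (u l k).ncard with hc
    have hne : (Set.range c).Nonempty := ⟨c 0, Set.mem_range_self 0⟩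
    have hmem := Nat.sInf_mem hne
    obtain ⟨k₀, hk₀⟩ := hmem
    refine ⟨k₀, ?_⟩
    intro k hk
    refine Set.eq_of_subset_of_ncard_le (u_mono_le l k₀ k hk) ?_ (u_fin l k₀)
    have h1 : c k₀ ≤ c k := by
      rw [hk₀]
      exact Nat.sInf_le ⟨k, rfl⟩
    exact h1
  choose k₀ hk₀ using S1
  -- the divisibility ladder
  have Bkey : ∀ (l : Λ) (n : ℕ) (x : L), (p : ℤ_[p]) ^ n • x = 0 →
      ∀ m : ℕ, x ∈ Ik l (k₀ l) → x ∈ Ik l (k₀ l + m) := by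
    intro l n
    induction n with
    | zero =>
      intro x hx m _
      have : x = 0 := by simpa using hx
      rw [this]; exact zero_mem _
    | succ n ih =>
      intro x hx m
      induction m with
      | zero => intro h; simpa using h
      | succ m ihm =>
        intro hx0
        have hxm : x ∈ Ik l (k₀ l + m) := ihm hx0
        obtain ⟨i, hi⟩ := Ik_elim l (k₀ l + m) x hxm
        have hvmem : (p : ℤ_[p]) ^ n • x ∈ Ik l (k₀ l + m + n) := by
          refine ⟨i, ?_⟩
          rw [LinearMap.smul_apply, ← hi]
          module
        have hvtor : (p : ℤ_[p]) • ((p : ℤ_[p]) ^ n • x) = 0 := by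
          rw [smul_smul, ← pow_succ', hx]
        have hvin : (p : ℤ_[p]) ^ n • x ∈ u l (k₀ l + m + n) := ⟨hvtor, hvmem⟩
        have h1 : u l (k₀ l + m + n) = u l (k₀ l) := hk₀ l _ (by omega)
        have h2 : u l (k₀ l + m + n + 1) = u l (k₀ l) := hk₀ l _ (by omega)
        rw [h1, ← h2] at hvin
        obtain ⟨j, hj⟩ := Ik_elim l (k₀ l + m + n + 1) _ hvin.2
        set w : L := (p : ℤ_[p]) ^ (k₀ l + m + 1) • f l j with hw
        have hwmem : w ∈ Ik l (k₀ l + m + 1) := Ik_intro l (k₀ l + m + 1) j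
        have hwx : (p : ℤ_[p]) ^ n • w = (p : ℤ_[p]) ^ n • x := by
          rw [hw, ← hj]
          module
        have hxw_tor : (p : ℤ_[p]) ^ n • (x - w) = 0 := by
          rw [smul_sub, hwx, sub_self]
        have hxw_mem : x - w ∈ Ik l (k₀ l) := by
          refine sub_mem ?_ ?_
          · exact Ik_mono_k l (k₀ l) m x hxm
          · exact Ik_mono_k l (k₀ l) (m + 1) w hwmem
        have hxw : x - w ∈ Ik l (k₀ l + (m + 1)) := ih (x - w) hxw_tor (m + 1) hxw_mem
        have hxeq : x = (x - w) + w := by abel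
        rw [hxeq]
        exact add_mem hxw (by rw [show k₀ l + (m + 1) = k₀ l + m + 1 from by omega]; exact hwmem)
  -- iterated division inside Ik l (k₀ l)
  have Ddiv : ∀ (l : Λ) (x : L), x ∈ Ik l (k₀ l) → ∀ n : ℕ,
      ∃ u' : L, u' ∈ Ik l (k₀ l) ∧ (p : ℤ_[p]) ^ n • u' = x ∧
        ∃ m : N l, (p : ℤ_[p]) ^ (k₀ l) • f l m = u' := by
    intro l x hx n
    obtain ⟨Nn, hNn⟩ := tor x
    have hx' : x ∈ Ik l (k₀ l + n) := Bkey l Nn x hNn n hx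
    obtain ⟨i, hi⟩ := Ik_elim l (k₀ l + n) x hx'
    refine ⟨(p : ℤ_[p]) ^ (k₀ l) • f l i, Ik_intro l (k₀ l) i, ?_, i, rfl⟩
    rw [← hi]
    module
  -- monotonicity of the divisible parts
  have Dmono : ∀ {l l' : Λ}, l ≤ l' → ∀ x : L, x ∈ Ik l (k₀ l) → x ∈ Ik l' (k₀ l') := by
    intro l l' hll' x hx
    obtain ⟨Nn, hNn⟩ := tor x
    have hx' : x ∈ Ik l (k₀ l + k₀ l') := Bkey l Nn x hNn (k₀ l') hx
    have hx'' : x ∈ Ik l (k₀ l') := by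
      rw [add_comm] at hx'
      exact Ik_mono_k l (k₀ l') (k₀ l) x hx'
    exact Ik_mono_l hll' (k₀ l') x hx''
  -- argmax choice of l₀
  set Dt : Λ → Set L := fun l => u l (k₀ l) with hDt
  set c : Λ → ℕ := fun l => (Dt l).ncard with hc
  have hbdd : BddAbove (Set.range c) := by
    refine ⟨LpS.ncard, ?_⟩
    rintro _ ⟨l, rfl⟩
    exact Set.ncard_le_ncard (fun x hx => hx.1) hLpFin
  obtain ⟨l₀, hl₀max⟩ : ∃ l₀ : Λ, ∀ l, c l ≤ c l₀ := by
    have hne : (Set.range c).Nonempty := ⟨c (Classical.arbitrary Λ), Set.mem_range_self _⟩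
    obtain ⟨l₀, hl₀⟩ := Nat.sSup_mem hne hbdd
    exact ⟨l₀, fun l => hl₀ ▸ le_csSup hbdd (Set.mem_range_self l)⟩
  refine ⟨l₀, ?_⟩
  intro l hl x hfx
  -- the divisible parts at l and l₀ agree
  have hDt_eq : Dt l₀ = Dt l := by
    apply Set.eq_of_subset_of_ncard_le
    · intro v hv
      exact ⟨hv.1, Dmono hl v hv.2⟩
    · exact hl₀max l
    · exact hLpFin.subset (fun v hv => hv.1)
  have DlD : ∀ v : L, v ∈ Ik l (k₀ l) → v ∈ Ik l₀ (k₀ l₀) := by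
    have C : ∀ (n : ℕ) (v : L), (p : ℤ_[p]) ^ n • v = 0 →
        v ∈ Ik l (k₀ l) → v ∈ Ik l₀ (k₀ l₀) := by
      intro n
      induction n with
      | zero =>
        intro v hv _
        have : v = 0 := by simpa using hv
        rw [this]; exact zero_mem _
      | succ n ih =>
        intro v hv hvmem
        have hv1 : (p : ℤ_[p]) ^ n • v ∈ Dt l := by
          refine ⟨?_, ?_⟩
          · rw [smul_smul, ← pow_succ', hv]
          · exact Submodule.smul_mem _ _ hvmem
        rw [← hDt_eq] at hv1
        obtain ⟨u', hu'mem, hu', -⟩ := Ddiv l₀ _ hv1.2 n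
        have hsub_tor : (p : ℤ_[p]) ^ n • (v - u') = 0 := by
          rw [smul_sub, hu', sub_self]
        have hsub_mem : v - u' ∈ Ik l (k₀ l) :=
          sub_mem hvmem (Dmono hl u' hu'mem)
        have := ih (v - u') hsub_tor hsub_mem
        have hveq : v = (v - u') + u' := by abel
        rw [hveq]
        exact add_mem this hu'mem
    intro v hv
    obtain ⟨n, hn⟩ := tor v
    exact C n v hn hv
  -- step 1: iterated decomposition
  have step1 : ∀ k : ℕ, ∃ (Z : N l₀) (Y : N l), t hl Z = x - (p : ℤ_[p]) ^ (k + 1) • Y := by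
    intro k
    induction k with
    | zero =>
      obtain ⟨y, z, hz⟩ := hdivcoker l₀ l hl x
      exact ⟨z, y, by rw [pow_one]; exact hz⟩
    | succ k ih =>
      obtain ⟨Z, Y, hZ⟩ := ih
      obtain ⟨y', z', hz'⟩ := hdivcoker l₀ l hl Y
      refine ⟨Z + (p : ℤ_[p]) ^ (k + 1) • z', y', ?_⟩
      rw [map_add, map_smul, hZ, hz']
      module
  obtain ⟨Z, Y, hZY⟩ := step1 (k₀ l)
  set e : L := (p : ℤ_[p]) ^ (k₀ l) • f l Y with he_def
  have he : e ∈ Ik l (k₀ l) := Ik_intro l (k₀ l) Y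
  have he₀ : e ∈ Ik l₀ (k₀ l₀) := DlD e he
  obtain ⟨u', hu'mem, hu', j, hj⟩ := Ddiv l₀ e he₀ 1
  -- w with f l₀ w = u' and p • u' = e
  set w : N l₀ := (p : ℤ_[p]) ^ (k₀ l₀) • j with hw_def
  have hfw : f l₀ w = u' := by rw [hw_def, map_smul, hj]
  have hpw : (p : ℤ_[p]) • f l₀ w = e := by rw [hfw, ← pow_one ((p : ℤ_[p])), ← hu']
  -- value of f l₀ Z
  have hfZ : f l₀ Z = -((p : ℤ_[p]) • e) := by
    have h1 : f l (t hl Z) = f l₀ Z := LinearMap.congr_fun (hf l₀ l hl) Z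
    rw [← h1, hZY, map_sub, hfx, map_smul, zero_sub, he_def]
    module
  -- construct z and y
  refine ⟨(p : ℤ_[p]) ^ (k₀ l) • Y - (p : ℤ_[p]) • (t hl w), ?_,
    Z + (p : ℤ_[p]) • ((p : ℤ_[p]) • w), ?_, ?_⟩
  · -- f l y = 0
    rw [map_sub, map_smul, map_smul]
    rw [show f l (t hl w) = f l₀ w from LinearMap.congr_fun (hf l₀ l hl) w]
    rw [hpw, ← he_def, sub_self]
  · -- f l₀ z = 0
    rw [map_add, map_smul, map_smul, hfZ, hpw]
    abel
  · -- t hl z = x - p • y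
    rw [map_add, map_smul, map_smul, hZY]
    module

/-- Sublemma 2.3: given an inductive system `{N_λ}` of cofinitely generated `ℤ_p`-modules
over a directed set with divisible cokernels of transition maps, a cofinitely generated
`ℤ_p`-module `L` and a compatible family `f_λ : N_λ → L`, there is `λ₀` such that for
every `λ ≥ λ₀` the cokernel of `Ker(f_{λ₀}) → Ker(f_λ)` is divisible. -/
theorem stmt8 {p : ℕ} [Fact p.Prime]
    {Λ : Type*} [Preorder Λ] [IsDirected Λ (· ≤ ·)] [Nonempty Λ]
    (N : Λ → Type*) [∀ l, AddCommGroup (N l)] [∀ l, Module ℤ_[p] (N l)]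
    (t : ∀ ⦃i j : Λ⦄, i ≤ j → N i →ₗ[ℤ_[p]] N j)
    (ht_id : ∀ (i : Λ) (x : N i), t (le_refl i) x = x)
    (ht_comp : ∀ (i j k : Λ) (hij : i ≤ j) (hjk : j ≤ k) (x : N i),
      t hjk (t hij x) = t (hij.trans hjk) x)
    (hcofin : ∀ i, CofinGen p (N i))
    (hdivcoker : ∀ (i j : Λ) (hij : i ≤ j), ∀ x : N j, ∃ y : N j, ∃ z : N i,
      t hij z = x - (p : ℤ_[p]) • y)
    {L : Type*} [AddCommGroup L] [Module ℤ_[p] L] (hL : CofinGen p L)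
    (f : ∀ i, N i →ₗ[ℤ_[p]] L)
    (hf : ∀ (i j : Λ) (hij : i ≤ j), (f j).comp (t hij) = f i) :
    ∃ l₀ : Λ, ∀ (l : Λ) (hl : l₀ ≤ l), ∀ x : N l, f l x = 0 →
      ∃ y : N l, f l y = 0 ∧ ∃ z : N l₀, f l₀ z = 0 ∧ t hl z = x - (p : ℤ_[p]) • y := by
  exact stmt8' N t ht_id ht_comp hdivcoker hL f hf
end

section
/- Let {A_λ}_{λ∈Λ} be an inductive system of cofinitely generated Z_p-modules over a directed set Λ such that for each pair λ' ≥ λ the induced map Cotor(A_λ) → Cotor(A_{λ'}) is surjective, and suppose all Cotor(A_λ) are finite of bounded order eventually (e.g., because the system of cotorsion parts stabilizes). Then colim_λ (A_λ)_Div = (colim_λ A_λ)_Div. -/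
/-- The divisible part is itself divisible. -/
lemma divPart_isDivisible (p : ℕ) [Fact p.Prime] (A : Type*) [AddCommGroup A]
    [Module ℤ_[p] A] : IsDivisibleSubmodule p (divPart p A) := by
  intro x hx
  have hx' : x ∈ ⨆ D : {D : Submodule ℤ_[p] A | IsDivisibleSubmodule p D}, (D : Submodule ℤ_[p] A) := by
    rwa [← sSup_eq_iSup']
  refine Submodule.iSup_induction (motive := fun x => ∃ y ∈ divPart p A, (p : ℤ_[p]) • y = x)
    _ hx' ?_ ?_ ?_
  · rintro ⟨D, hD⟩ z hz
    obtain ⟨y, hy, hpy⟩ := hD z hz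
    exact ⟨y, le_sSup hD hy, hpy⟩
  · exact ⟨0, (divPart p A).zero_mem, by simp⟩
  · rintro a b ⟨y, hy, hpy⟩ ⟨y', hy', hpy'⟩
    exact ⟨y + y', (divPart p A).add_mem hy hy', by rw [smul_add, hpy, hpy']⟩

lemma divPart_pow_div (p : ℕ) [Fact p.Prime] (A : Type*) [AddCommGroup A]
    [Module ℤ_[p] A] (n : ℕ) :
    ∀ x ∈ divPart p A, ∃ y ∈ divPart p A, ((p : ℤ_[p]) ^ n) • y = x := by
  induction n with
  | zero => exact fun x hx => ⟨x, hx, by simp⟩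
  | succ n ih =>
    intro x hx
    obtain ⟨y, hy, hpy⟩ := divPart_isDivisible p A x hx
    obtain ⟨z, hz, hpz⟩ := ih y hy
    exact ⟨z, hz, by rw [pow_succ, mul_comm, mul_smul, hpz, hpy]⟩

/-- In a finite `ℤ_p`-module quotient, `p ^ C` kills everything once `C` bounds the card. -/
lemma pow_smul_mem_divPart (p : ℕ) [Fact p.Prime] (A : Type*) [AddCommGroup A]
    [Module ℤ_[p] A] (C : ℕ) (hfin : Finite (Cotor p A)) (hcard : Nat.card (Cotor p A) ≤ C)
    (z : A) : ((p : ℤ_[p]) ^ C) • z ∈ divPart p A := by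
  set n := Nat.card (Cotor p A) with hn
  have hp := (Fact.out : p.Prime)
  have hn0 : n ≠ 0 := Nat.card_ne_zero.2 ⟨⟨0⟩, hfin⟩
  set k := n.factorization p with hk
  set u := n / p ^ k with hu
  have hfact : p ^ k * u = n := Nat.ordProj_mul_ordCompl_eq_self n p
  have hund : ¬ (p : ℕ) ∣ u := Nat.not_dvd_ordCompl hp hn0
  -- u is a unit in ℤ_p
  have hunit : IsUnit ((u : ℤ_[p])) := by
    by_contra h
    rw [PadicInt.not_isUnit_iff] at h
    have : ‖((u : ℤ) : ℤ_[p])‖ < 1 := by exact_mod_cast h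
    rw [PadicInt.norm_int_lt_one_iff_dvd] at this
    exact hund (by exact_mod_cast this)
  -- in Cotor, n • x = 0
  set x : Cotor p A := Submodule.Quotient.mk z with hx
  have hnx : n • x = 0 := by
    have := hfin
    exact card_nsmul_eq_zero'
  have hnx' : ((n : ℤ_[p])) • x = 0 := by
    rw [Nat.cast_smul_eq_nsmul]; exact hnx
  have hpkx : ((p : ℤ_[p]) ^ k) • x = 0 := by
    obtain ⟨v, hv⟩ := hunit
    have : ((n : ℤ_[p])) = (p : ℤ_[p]) ^ k * (u : ℤ_[p]) := by
      rw [← hfact]; push_cast; ring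
    have h2 : ((v⁻¹ : ℤ_[p]ˣ) : ℤ_[p]) • (((n : ℤ_[p])) • x) = ((p : ℤ_[p]) ^ k) • x := by
      rw [this, ← hv, mul_comm, mul_smul, smul_smul, ← Units.val_mul, inv_mul_cancel,
        Units.val_one, one_smul]
    rw [hnx', smul_zero] at h2
    exact h2.symm
  have hkC : k ≤ C := by
    have h1 : p ^ k ≤ n := Nat.ordProj_le p hn0
    have h2 : k < p ^ k := Nat.lt_pow_self (n := k) hp.one_lt
    omega
  have : ((p : ℤ_[p]) ^ C) • x = 0 := by
    have : (p : ℤ_[p]) ^ C = (p : ℤ_[p]) ^ (C - k) * (p : ℤ_[p]) ^ k := by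
      rw [← pow_add]; congr 1; omega
    rw [this, mul_smul, hpkx, smul_zero]
  rwa [hx, ← Submodule.Quotient.mk_smul, Submodule.Quotient.mk_eq_zero] at this

/-- Divisible parts commute with the direct limit: for an inductive system `{A_λ}` of
cofinitely generated `ℤ_p`-modules over a directed set whose cotorsion transition maps are
surjective, with the cotorsion parts eventually finite of bounded order, one has
`colim (A_λ)_Div = (colim A_λ)_Div` inside the direct limit. -/
theorem stmt10 {p : ℕ} [Fact p.Prime]
    {Λ : Type} [Preorder Λ] [IsDirected Λ (· ≤ ·)] [Nonempty Λ] [DecidableEq Λ]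
    (A : Λ → Type) [∀ l, AddCommGroup (A l)] [∀ l, Module ℤ_[p] (A l)]
    (t : ∀ i j : Λ, i ≤ j → A i →ₗ[ℤ_[p]] A j)
    [DirectedSystem A fun i j h => t i j h]
    (hcofin : ∀ i, CofinGen p (A i))
    (hcotorsurj : ∀ (i j : Λ) (hij : i ≤ j),
      ∀ x : A j, ∃ y : A i, x - t i j hij y ∈ divPart p (A j))
    (hbdd : ∃ (C : ℕ) (l₁ : Λ), ∀ l : Λ, l₁ ≤ l →
      Finite (Cotor p (A l)) ∧ Nat.card (Cotor p (A l)) ≤ C) :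
    (⨆ i : Λ, Submodule.map (Module.DirectLimit.of ℤ_[p] Λ A t i) (divPart p (A i)))
      = divPart p (Module.DirectLimit A t) := by
  apply le_antisymm
  · -- each image of a divisible part is divisible, hence ≤ divPart of the limit
    refine iSup_le fun i => le_sSup ?_
    rintro _ ⟨a, ha, rfl⟩
    obtain ⟨b, hb, hpb⟩ := divPart_isDivisible p (A i) a ha
    exact ⟨Module.DirectLimit.of ℤ_[p] Λ A t i b, ⟨b, hb, rfl⟩, by rw [← map_smul, hpb]⟩
  · intro x hx
    obtain ⟨C, l₁, hC⟩ := hbdd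
    -- divide x by p^C inside the divisible part of the limit
    obtain ⟨y, hy, hpy⟩ := divPart_pow_div p (Module.DirectLimit A t) C x hx
    obtain ⟨m, z, hz⟩ := Module.DirectLimit.exists_of y
    obtain ⟨m', hm1, hm2⟩ := directed_of (· ≤ ·) m l₁
    obtain ⟨fin, card⟩ := hC m' hm2
    have hmem : ((p : ℤ_[p]) ^ C) • (t m m' hm1 z) ∈ divPart p (A m') :=
      pow_smul_mem_divPart p (A m') C fin card _
    have hxe : x = Module.DirectLimit.of ℤ_[p] Λ A t m' (((p : ℤ_[p]) ^ C) • t m m' hm1 z) := by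
      rw [map_smul, Module.DirectLimit.of_f, hz, hpy]
    refine Submodule.mem_iSup_of_mem m' ?_
    exact hxe ▸ ⟨_, hmem, rfl⟩
end

section
/- Let M be a Z_p-module fitting in an exact sequence E → M → N → 0 of Z_p-modules where E has finite exponent, N is divisible and cofinitely generated, and M is divisible. Then M is cofinitely generated. -/
/-- Lemma 1.3 (2) in the form used for graded quotients: if `E → M → N → 0` is exact with
`E` of finite exponent, `N` divisible and cofinitely generated, and `M` divisible, then
`M` is cofinitely generated. -/
theorem stmt13 {p : ℕ} [Fact p.Prime]
    {E M N : Type*} [AddCommGroup E] [Module ℤ_[p] E] [AddCommGroup M] [Module ℤ_[p] M]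
    [AddCommGroup N] [Module ℤ_[p] N]
    (u : E →ₗ[ℤ_[p]] M) (v : M →ₗ[ℤ_[p]] N)
    (hv : Function.Surjective v)
    (huv : LinearMap.range u = LinearMap.ker v)
    (hE : ∃ e : ℕ, ∀ x : E, (p : ℤ_[p]) ^ e • x = 0)
    (hNdiv : IsDivisibleSubmodule p (⊤ : Submodule ℤ_[p] N))
    (hNcofin : CofinGen p N)
    (hMdiv : IsDivisibleSubmodule p (⊤ : Submodule ℤ_[p] M)) :
    CofinGen p M := by
  obtain ⟨e, he⟩ := hE
  have hdiv : ∀ (k : ℕ) (x : M), ∃ y : M, (p : ℤ_[p]) ^ k • y = x := by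
    intro k
    induction k with
    | zero => intro x; exact ⟨x, by simp⟩
    | succ k ih =>
      intro x
      obtain ⟨y, -, hy⟩ := hMdiv x trivial
      obtain ⟨z, hz⟩ := ih y
      exact ⟨z, by rw [pow_succ, mul_comm, mul_smul, hz, hy]⟩
  unfold CofinGen at *
  set D := QpModZp p with hD
  let L : (N →ₗ[ℤ_[p]] D) →ₗ[ℤ_[p]] (M →ₗ[ℤ_[p]] D) := v.lcomp ℤ_[p] D
  have hLinj : Function.Injective L := by
    intro g₁ g₂ hg
    ext n
    obtain ⟨x, rfl⟩ := hv n
    exact congrArg (fun f => f x) hg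
  have hker : ∀ f : M →ₗ[ℤ_[p]] D,
      LinearMap.ker v ≤ LinearMap.ker ((p : ℤ_[p]) ^ e • f) := by
    intro f x hx
    rw [← huv] at hx
    obtain ⟨y, rfl⟩ := hx
    simp only [LinearMap.mem_ker, LinearMap.smul_apply]
    rw [← map_smul, ← map_smul, he, map_zero, map_zero]
  have hmem : ∀ f : M →ₗ[ℤ_[p]] D, (p : ℤ_[p]) ^ e • f ∈ LinearMap.range L := by
    intro f
    refine ⟨((LinearMap.ker v).liftQ ((p : ℤ_[p]) ^ e • f) (hker f)).comp
      (v.quotKerEquivOfSurjective hv).symm.toLinearMap, ?_⟩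
    ext x
    have h1 : (v.quotKerEquivOfSurjective hv).symm (v x) = Submodule.Quotient.mk x := by
      apply (v.quotKerEquivOfSurjective hv).injective
      rw [LinearEquiv.apply_symm_apply]
      rfl
    simp only [L, LinearMap.lcomp_apply, LinearMap.coe_comp, Function.comp_apply,
      LinearEquiv.coe_toLinearMap, h1]
    rfl
  have htf : ∀ f : M →ₗ[ℤ_[p]] D, (p : ℤ_[p]) ^ e • f = 0 → f = 0 := by
    intro f hf
    ext x
    obtain ⟨y, rfl⟩ := hdiv e x
    rw [map_smul]
    have := congrArg (fun g => g y) hf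
    simpa only [LinearMap.smul_apply, LinearMap.zero_apply] using this
  let sm : (M →ₗ[ℤ_[p]] D) →ₗ[ℤ_[p]] (M →ₗ[ℤ_[p]] D) := (p : ℤ_[p]) ^ e • LinearMap.id
  let μ : (M →ₗ[ℤ_[p]] D) →ₗ[ℤ_[p]] LinearMap.range L :=
    sm.codRestrict (LinearMap.range L) (fun f => hmem f)
  let μ' : (M →ₗ[ℤ_[p]] D) →ₗ[ℤ_[p]] (N →ₗ[ℤ_[p]] D) :=
    ((LinearEquiv.ofInjective L hLinj).symm.toLinearMap).comp μ
  have hμ'inj : Function.Injective μ' := by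
    intro f g hfg
    have h1 : μ f = μ g := (LinearEquiv.ofInjective L hLinj).symm.injective hfg
    have h2 : (p : ℤ_[p]) ^ e • f = (p : ℤ_[p]) ^ e • g := congrArg Subtype.val h1
    have h3 : (p : ℤ_[p]) ^ e • (f - g) = 0 := by rw [smul_sub, h2, sub_self]
    exact sub_eq_zero.mp (htf _ h3)
  haveI := hNcofin
  have hN : IsNoetherian ℤ_[p] (N →ₗ[ℤ_[p]] D) :=
    isNoetherian_of_isNoetherianRing_of_finite ℤ_[p] _
  exact Module.Finite.of_injective μ' hμ'inj
end
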